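/- arXiv:1506.08592 — 2 statements merged into one kernel-verified Lean document; each statement's English description precedes it below -/
import Mathlib

section
/- For every finite simple graph G with at least one isolated vertex, GDS(G) = D^O(G); that is, the worst-case dominating set size of the greedy algorithm on G equals the online domination number of G. -/
namespace OnlinePaper

/-- A deterministic online algorithm in the vertex-arrival model: given the number `n` of
previously revealed vertices and the Boolean adjacency matrix on the `n + 1` revealed
vertices (the newly revealed vertex has index `Fin.last n`), decide whether to accept the
newly revealed vertex.  The algorithm sees only this order-canonical information. -/
def OnlineAlg : Type := (n : ℕ) → (Fin (n + 1) → Fin (n + 1) → Bool) → Bool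

/-- The complement algorithm `ĀLG`: it simulates `A` and accepts exactly the requests
that `A` rejects. -/
def coAlg (A : OnlineAlg) : OnlineAlg := fun n M => !(A n M)

variable {V : Type}

/-- The Boolean adjacency matrix on the first `i + 1` revealed vertices, when the graph `G`
is presented in the order `φ`. -/
noncomputable def revealedMatrix [Fintype V] (G : SimpleGraph V)
    (φ : Fin (Fintype.card V) ≃ V) (i : Fin (Fintype.card V)) :
    Fin (i.val + 1) → Fin (i.val + 1) → Bool :=
  fun a b =>
    @decide (G.Adj (φ ⟨a.val, by have := a.isLt; have := i.isLt; omega⟩)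
        (φ ⟨b.val, by have := b.isLt; have := i.isLt; omega⟩)) (Classical.propDecidable _)

/-- Whether the algorithm `A` accepts the vertex revealed at step `i` when the graph `G` is
presented in the order `φ`. -/
noncomputable def accepts [Fintype V] (A : OnlineAlg) (G : SimpleGraph V)
    (φ : Fin (Fintype.card V) ≃ V) (i : Fin (Fintype.card V)) : Bool :=
  A i.val (revealedMatrix G φ i)

/-- The set of vertices accepted by `A` when `G` is presented in the order `φ`. -/
noncomputable def acceptedSet [Fintype V] (A : OnlineAlg) (G : SimpleGraph V)
    (φ : Fin (Fintype.card V) ≃ V) : Finset V :=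
  Finset.univ.filter (fun v => accepts A G φ (φ.symm v) = true)

/-- `s` is an independent set of `G`. -/
def IsIndep (G : SimpleGraph V) (s : Finset V) : Prop := ∀ a ∈ s, ∀ b ∈ s, ¬ G.Adj a b

/-- `s` is a vertex cover of `G`. -/
def IsVC (G : SimpleGraph V) (s : Finset V) : Prop := ∀ a b : V, G.Adj a b → a ∈ s ∨ b ∈ s

/-- `s` is a dominating set of `G`. -/
def IsDom (G : SimpleGraph V) (s : Finset V) : Prop := ∀ v : V, v ∈ s ∨ ∃ u ∈ s, G.Adj u v

/-- `s` is an inclusion-maximal independent set of `G`. -/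
def IsMaxIndep [DecidableEq V] (G : SimpleGraph V) (s : Finset V) : Prop :=
  IsIndep G s ∧ ∀ v ∉ s, ¬ IsIndep G (insert v s)

/-- For maximization problems: the worst-case (minimum over orderings) number of requests
accepted by `A` on `G`. -/
noncomputable def minScore [Fintype V] (A : OnlineAlg) (G : SimpleGraph V) : ℕ :=
  sInf {m | ∃ φ : Fin (Fintype.card V) ≃ V, (acceptedSet A G φ).card = m}

/-- For minimization problems: the worst-case (maximum over orderings) number of requests
accepted by `A` on `G`. -/
noncomputable def maxScore [Fintype V] (A : OnlineAlg) (G : SimpleGraph V) : ℕ :=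
  sSup {m | ∃ φ : Fin (Fintype.card V) ≃ V, (acceptedSet A G φ).card = m}

/-- The online independence number `I^O(G)`: the largest `m` such that some online
algorithm accepts, on every ordering, an independent set of size at least `m`. -/
noncomputable def onlineIndepNum [Fintype V] (G : SimpleGraph V) : ℕ :=
  sSup {m | ∃ A : OnlineAlg, ∀ φ : Fin (Fintype.card V) ≃ V,
      IsIndep G (acceptedSet A G φ) ∧ m ≤ (acceptedSet A G φ).card}

/-- The online vertex cover number `V^O(G)`: the smallest `m` such that some online
algorithm accepts, on every ordering, a vertex cover of size at most `m`. -/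
noncomputable def onlineVCNum [Fintype V] (G : SimpleGraph V) : ℕ :=
  sInf {m | ∃ A : OnlineAlg, ∀ φ : Fin (Fintype.card V) ≃ V,
      IsVC G (acceptedSet A G φ) ∧ (acceptedSet A G φ).card ≤ m}

/-- The online domination number `D^O(G)`: the smallest `m` such that some online
algorithm accepts, on every ordering, a dominating set of size at most `m`. -/
noncomputable def onlineDomNum [Fintype V] (G : SimpleGraph V) : ℕ :=
  sInf {m | ∃ A : OnlineAlg, ∀ φ : Fin (Fintype.card V) ≃ V,
      IsDom G (acceptedSet A G φ) ∧ (acceptedSet A G φ).card ≤ m}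

/-- The greedy independent set decision: accept the newly revealed vertex iff none of its
previously revealed neighbors has been accepted (by the same greedy rule). -/
def gisAux : (n : ℕ) → (Fin (n + 1) → Fin (n + 1) → Bool) → Bool
  | n, M =>
    decide (∀ j : Fin n,
      gisAux j.val (fun a b => M (Fin.castLE (Nat.succ_le_succ j.isLt.le) a)
        (Fin.castLE (Nat.succ_le_succ j.isLt.le) b)) = true →
      M j.castSucc (Fin.last n) = false)
termination_by n => n
decreasing_by all_goals exact Fin.isLt _

/-- `GIS`, the greedy algorithm for Online Independent Set. -/
def gisAlg : OnlineAlg := fun n M => gisAux n M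

/-- `GDS`, the greedy algorithm for Online Dominating Set (the same algorithm as `GIS`). -/
def gdsAlg : OnlineAlg := gisAlg

/-- The greedy vertex cover decision: accept the newly revealed vertex iff it has a
previously revealed neighbor that was rejected (by the same greedy rule). -/
def gvcAux : (n : ℕ) → (Fin (n + 1) → Fin (n + 1) → Bool) → Bool
  | n, M =>
    decide (∃ j : Fin n,
      gvcAux j.val (fun a b => M (Fin.castLE (Nat.succ_le_succ j.isLt.le) a)
        (Fin.castLE (Nat.succ_le_succ j.isLt.le) b)) = false ∧
      M j.castSucc (Fin.last n) = true)
termination_by n => n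
decreasing_by all_goals exact Fin.isLt _

/-- `GVC`, the greedy algorithm for Online Vertex Cover. -/
def gvcAlg : OnlineAlg := fun n M => gvcAux n M

/-- `IS-STAR`: rejects the first vertex; rejects the second vertex if it is adjacent to the
first; rejects any later vertex having more than one previously revealed neighbor; accepts
every other vertex. -/
def isStarAlg : OnlineAlg := fun n M =>
  let c := (Finset.univ.filter (fun j : Fin n => M j.castSucc (Fin.last n) = true)).card
  if n = 0 then false
  else if n = 1 then decide (c = 0)
  else decide (c ≤ 1)

/-- `Almost-GIS`: identical to `GIS` except that it additionally rejects any revealed vertex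
having at least two previously revealed neighbors. -/
def almostGisAux : (n : ℕ) → (Fin (n + 1) → Fin (n + 1) → Bool) → Bool
  | n, M =>
    (decide (∀ j : Fin n,
      almostGisAux j.val (fun a b => M (Fin.castLE (Nat.succ_le_succ j.isLt.le) a)
        (Fin.castLE (Nat.succ_le_succ j.isLt.le) b)) = true →
      M j.castSucc (Fin.last n) = false)) &&
    decide ((Finset.univ.filter (fun j : Fin n => M j.castSucc (Fin.last n) = true)).card ≤ 1)
termination_by n => n
decreasing_by all_goals exact Fin.isLt _

/-- `Almost-GIS` as an online algorithm. -/
def almostGisAlg : OnlineAlg := fun n M => almostGisAux n M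

/-- The star graph `S_n`: a center `0` adjacent to `n` further vertices, and no other edges. -/
def starGraph (n : ℕ) : SimpleGraph (Fin (n + 1)) where
  Adj a b := a ≠ b ∧ (a = 0 ∨ b = 0)
  symm := ⟨fun _ _ h => ⟨h.1.symm, h.2.symm⟩⟩
  loopless := ⟨fun _ h => h.1 rfl⟩

/-- `v` is an isolated vertex of `G`. -/
def IsIsolated (G : SimpleGraph V) (v : V) : Prop := ∀ u : V, ¬ G.Adj v u

/-- `k(G)`: the number of isolated vertices of `G`. -/
noncomputable def numIsolated [Fintype V] (G : SimpleGraph V) : ℕ :=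
  Finset.card (@Finset.filter V (fun v => IsIsolated G v) (Classical.decPred _) Finset.univ)

/-- `G'`: the subgraph of `G` induced by the non-isolated vertices. -/
def inducedNonIsolated (G : SimpleGraph V) : SimpleGraph {v : V // ¬ IsIsolated G v} :=
  SimpleGraph.comap Subtype.val G

noncomputable instance {α : Type} [Fintype α] {p : α → Prop} : Fintype {v : α // p v} :=
  Fintype.ofFinite _

/-- The independent domination number: the minimum size of an inclusion-maximal independent
set of `G`. -/
noncomputable def indepDomNum [DecidableEq V] (G : SimpleGraph V) : ℕ :=
  sInf {m | ∃ s : Finset V, IsMaxIndep G s ∧ s.card = m}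

/-- The independence number `α(G)`: the maximum size of an independent set of `G`. -/
noncomputable def indepNum (G : SimpleGraph V) : ℕ :=
  sSup {m | ∃ s : Finset V, IsIndep G s ∧ s.card = m}

/-- `G` is a Freckle Graph: `k(G) + s(G') ≥ I^O(G')`. -/
noncomputable def IsFreckle [Fintype V] [DecidableEq V] (G : SimpleGraph V) : Prop :=
  onlineIndepNum (inducedNonIsolated G) ≤ numIsolated G + indepDomNum (inducedNonIsolated G)


section Aux

variable {V : Type}

/-- Characterization of GDS acceptance: a vertex is accepted iff it is not adjacent to any
previously revealed accepted vertex. -/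
lemma accepts_gds_iff [Fintype V] (G : SimpleGraph V) (φ : Fin (Fintype.card V) ≃ V)
    (i : Fin (Fintype.card V)) :
    accepts gdsAlg G φ i = true ↔
      ∀ j : Fin (Fintype.card V), j < i → accepts gdsAlg G φ j = true →
        ¬ G.Adj (φ j) (φ i) := by
  have h1 : accepts gdsAlg G φ i =
      decide (∀ j : Fin i.val,
        accepts gdsAlg G φ ⟨j.val, j.isLt.trans i.isLt⟩ = true →
        revealedMatrix G φ i j.castSucc (Fin.last i.val) = false) := by
    show gisAux i.val (revealedMatrix G φ i) = _
    rw [gisAux]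
    rfl
  classical
  rw [h1, decide_eq_true_iff]
  constructor
  · intro h j hji hacc hadj
    have h2 := h ⟨j.val, hji⟩ hacc
    exact of_decide_eq_false h2 hadj
  · intro h j hacc
    exact decide_eq_false (h ⟨j.val, j.isLt.trans i.isLt⟩ j.isLt hacc)

/-- GDS always produces a dominating set. -/
lemma gds_dom [Fintype V] (G : SimpleGraph V) (φ : Fin (Fintype.card V) ≃ V) :
    IsDom G (acceptedSet gdsAlg G φ) := by
  intro v
  by_cases h : accepts gdsAlg G φ (φ.symm v) = true
  · left
    simp only [acceptedSet, Finset.mem_filter, Finset.mem_univ, true_and]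
    exact h
  · right
    rw [accepts_gds_iff] at h
    push_neg at h
    obtain ⟨j, hji, hacc, hadj⟩ := h
    refine ⟨φ j, ?_, ?_⟩
    · simp only [acceptedSet, Finset.mem_filter, Finset.mem_univ, true_and,
        Equiv.symm_apply_apply]
      exact hacc
    · simpa using hadj

/-- GDS always produces an independent set. -/
lemma gds_indep [Fintype V] (G : SimpleGraph V) (φ : Fin (Fintype.card V) ≃ V) :
    IsIndep G (acceptedSet gdsAlg G φ) := by
  intro a ha b hb hadj
  simp only [acceptedSet, Finset.mem_filter, Finset.mem_univ, true_and] at ha hb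
  rcases lt_trichotomy (φ.symm a) (φ.symm b) with hlt | heq | hlt
  · have := (accepts_gds_iff G φ (φ.symm b)).mp hb (φ.symm a) hlt ha
    simp only [Equiv.apply_symm_apply] at this
    exact this hadj
  · have : a = b := φ.symm.injective heq
    subst this
    exact G.irrefl hadj
  · have := (accepts_gds_iff G φ (φ.symm a)).mp ha (φ.symm b) hlt hb
    simp only [Equiv.apply_symm_apply] at this
    exact this hadj.symm

/-- If the revealed prefix (including the new vertex) is independent and `G` has an
isolated vertex, any correct algorithm must accept. -/
lemma accept_forced [Fintype V] {G : SimpleGraph V} {A : OnlineAlg}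
    (hA : ∀ χ : Fin (Fintype.card V) ≃ V, IsDom G (acceptedSet A G χ))
    {w : V} (hw : IsIsolated G w) (ψ : Fin (Fintype.card V) ≃ V)
    (i : Fin (Fintype.card V))
    (hind : ∀ c d : Fin (Fintype.card V), c.val ≤ i.val → d.val ≤ i.val →
      ¬ G.Adj (ψ c) (ψ d)) :
    accepts A G ψ i = true := by
  classical
  set widx := ψ.symm w with hwidx
  set ψ' : Fin (Fintype.card V) ≃ V := (Equiv.swap i widx).trans ψ with hψ'
  have hP : ∀ c d : Fin (Fintype.card V),
      (c.val ≤ i.val ∨ c = widx) → (d.val ≤ i.val ∨ d = widx) →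
      ¬ G.Adj (ψ c) (ψ d) := by
    intro c d hc hd
    rcases hc with hc | rfl
    · rcases hd with hd | rfl
      · exact hind c d hc hd
      · intro h
        rw [hwidx, Equiv.apply_symm_apply] at h
        exact hw (ψ c) h.symm
    · intro h
      rw [hwidx, Equiv.apply_symm_apply] at h
      exact hw (ψ d) h
  have hswapP : ∀ c : Fin (Fintype.card V), c.val ≤ i.val →
      ((Equiv.swap i widx) c).val ≤ i.val ∨ (Equiv.swap i widx) c = widx := by
    intro c hc
    rcases eq_or_ne c i with rfl | hci
    · right; rw [Equiv.swap_apply_left]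
    · rcases eq_or_ne c widx with rfl | hcw
      · left; rw [Equiv.swap_apply_right]
      · left; rw [Equiv.swap_apply_of_ne_of_ne hci hcw]; exact hc
  have hM : ∀ (χ : Fin (Fintype.card V) ≃ V),
      (∀ c d : Fin (Fintype.card V), c.val ≤ i.val → d.val ≤ i.val →
        ¬ G.Adj (χ c) (χ d)) →
      revealedMatrix G χ i = fun _ _ => false := by
    intro χ hχ
    funext a b
    exact decide_eq_false (hχ ⟨a.val, lt_of_le_of_lt (Nat.lt_succ_iff.mp a.isLt) i.isLt⟩
      ⟨b.val, lt_of_le_of_lt (Nat.lt_succ_iff.mp b.isLt) i.isLt⟩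
      (Nat.lt_succ_iff.mp a.isLt) (Nat.lt_succ_iff.mp b.isLt))
  have hind' : ∀ c d : Fin (Fintype.card V), c.val ≤ i.val → d.val ≤ i.val →
      ¬ G.Adj (ψ' c) (ψ' d) := by
    intro c d hc hd
    exact hP _ _ (hswapP c hc) (hswapP d hd)
  have hmat : revealedMatrix G ψ' i = revealedMatrix G ψ i :=
    (hM ψ' hind').trans (hM ψ hind).symm
  have hw_in : w ∈ acceptedSet A G ψ' := by
    rcases hA ψ' w with h | ⟨u, _, hadj⟩
    · exact h
    · exact absurd hadj.symm (hw u)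
  have hacc : accepts A G ψ' (ψ'.symm w) = true := by
    simp only [acceptedSet, Finset.mem_filter, Finset.mem_univ, true_and] at hw_in
    exact hw_in
  have hidx : ψ'.symm w = i := by
    rw [hψ']
    simp only [Equiv.symm_trans_apply, Equiv.symm_swap, ← hwidx]
    exact Equiv.swap_apply_right i widx
  rw [hidx] at hacc
  show A i.val (revealedMatrix G ψ i) = true
  rw [← hmat]
  exact hacc

/-- There is an ordering presenting the members of `s` first. -/
lemma exists_prefix_equiv [Fintype V] (s : Finset V) :
    ∃ ψ : Fin (Fintype.card V) ≃ V, ∀ c : Fin (Fintype.card V),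
      ψ c ∈ s ↔ c.val < s.card := by
  classical
  have hcard1 : Fintype.card {v : V // v ∈ s} = s.card :=
    Fintype.card_of_subtype s (fun _ => Iff.rfl)
  have hcard2 : Fintype.card {v : V // ¬ v ∈ s} = Fintype.card V - s.card := by
    rw [Fintype.card_subtype_compl, hcard1]
  have hk : s.card ≤ Fintype.card V :=
    (Finset.card_le_univ s).trans (le_of_eq Finset.card_univ)
  have hN : Fintype.card V = s.card + (Fintype.card V - s.card) :=
    (Nat.add_sub_cancel' hk).symm
  let eL : Fin s.card ≃ {v : V // v ∈ s} := (Fintype.equivFinOfCardEq hcard1).symm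
  let eR : Fin (Fintype.card V - s.card) ≃ {v : V // ¬ v ∈ s} :=
    (Fintype.equivFinOfCardEq hcard2).symm
  refine ⟨(finCongr hN).trans (finSumFinEquiv.symm.trans
    ((eL.sumCongr eR).trans (Equiv.sumCompl (· ∈ s)))), ?_⟩
  intro c
  simp only [Equiv.trans_apply]
  rcases hx : finSumFinEquiv.symm (finCongr hN c) with d | d
  · have hc : (finCongr hN c) = finSumFinEquiv (Sum.inl d) := by
      rw [← hx, Equiv.apply_symm_apply]
    have hcv : c.val = d.val := by
      have := congrArg Fin.val hc
      simpa using this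
    simp only [Equiv.sumCongr_apply, Sum.map_inl, Equiv.sumCompl_apply_inl]
    constructor
    · intro _; rw [hcv]; exact d.isLt
    · intro _; exact (eL d).2
  · have hc : (finCongr hN c) = finSumFinEquiv (Sum.inr d) := by
      rw [← hx, Equiv.apply_symm_apply]
    have hcv : c.val = s.card + d.val := by
      have := congrArg Fin.val hc
      simpa using this
    simp only [Equiv.sumCongr_apply, Sum.map_inr, Equiv.sumCompl_apply_inr]
    constructor
    · intro hmem; exact absurd hmem (eR d).2
    · intro hlt; omega

end Aux

/-- if `G` has at least one isolated vertex then the greedy algorithm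
achieves the online domination number: `GDS(G) = D^O(G)` (and `GDS` always produces a
dominating set). -/
theorem statement13 {V : Type} [Fintype V] (G : SimpleGraph V)
    (hG : ∃ v : V, IsIsolated G v) :
    (∀ φ : Fin (Fintype.card V) ≃ V, IsDom G (acceptedSet gdsAlg G φ)) ∧
      maxScore gdsAlg G = onlineDomNum G := by
  classical
  obtain ⟨w, hw⟩ := hG
  have hcorrect : ∀ φ : Fin (Fintype.card V) ≃ V, IsDom G (acceptedSet gdsAlg G φ) :=
    gds_dom G
  refine ⟨hcorrect, ?_⟩
  have hne : ({m | ∃ φ : Fin (Fintype.card V) ≃ V,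
      (acceptedSet gdsAlg G φ).card = m} : Set ℕ).Nonempty :=
    ⟨_, (Fintype.equivFin V).symm, rfl⟩
  have hbdd : BddAbove {m | ∃ φ : Fin (Fintype.card V) ≃ V,
      (acceptedSet gdsAlg G φ).card = m} := by
    refine ⟨Fintype.card V, ?_⟩
    rintro m ⟨φ, rfl⟩
    exact Finset.card_le_univ _ |>.trans (le_of_eq (Finset.card_univ))
  have hub : ∀ φ : Fin (Fintype.card V) ≃ V,
      (acceptedSet gdsAlg G φ).card ≤ maxScore gdsAlg G :=
    fun φ => le_csSup hbdd ⟨φ, rfl⟩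
  have hdom_mem : maxScore gdsAlg G ∈ {m | ∃ A : OnlineAlg,
      ∀ φ : Fin (Fintype.card V) ≃ V,
        IsDom G (acceptedSet A G φ) ∧ (acceptedSet A G φ).card ≤ m} :=
    ⟨gdsAlg, fun φ => ⟨hcorrect φ, hub φ⟩⟩
  apply le_antisymm
  · apply le_csInf ⟨_, hdom_mem⟩
    rintro m ⟨A, hA⟩
    obtain ⟨φs, hφs⟩ : ∃ φ : Fin (Fintype.card V) ≃ V,
        (acceptedSet gdsAlg G φ).card = maxScore gdsAlg G :=
      Nat.sSup_mem hne hbdd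
    obtain ⟨ψ, hψ⟩ := exists_prefix_equiv (acceptedSet gdsAlg G φs)
    have hAcorrect : ∀ χ : Fin (Fintype.card V) ≃ V, IsDom G (acceptedSet A G χ) :=
      fun χ => (hA χ).1
    have hsub : acceptedSet gdsAlg G φs ⊆ acceptedSet A G ψ := by
      intro v hv
      have hvk : (ψ.symm v).val < (acceptedSet gdsAlg G φs).card := by
        apply (hψ (ψ.symm v)).mp
        rw [Equiv.apply_symm_apply]
        exact hv
      have hacc : accepts A G ψ (ψ.symm v) = true := by
        apply accept_forced hAcorrect hw
        intro c d hc hd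
        exact gds_indep G φs _ ((hψ c).mpr (lt_of_le_of_lt hc hvk)) _
          ((hψ d).mpr (lt_of_le_of_lt hd hvk))
      simp only [acceptedSet, Finset.mem_filter, Finset.mem_univ, true_and]
      exact hacc
    calc maxScore gdsAlg G = (acceptedSet gdsAlg G φs).card := hφs.symm
      _ ≤ (acceptedSet A G ψ).card := Finset.card_le_card hsub
      _ ≤ m := (hA ψ).2
  · exact Nat.sInf_le hdom_mem


end OnlinePaper
end

section
/- For every n ≥ 4 and every k ≥ 0, consider the graph G_{n,k} with vertices x, y, v_1, …, v_n together with k additional isolated vertices, and edges {x,y} and {x,v_i}, {y,v_i} for 1 ≤ i ≤ n. For Online Maximal Forest, the greedy algorithm satisfies GF(G_{n,k}) = k + 2, and there exists a deterministic online algorithm ALG with ALG(G_{n,k}) ≥ k + n − 1; in particular, since k + n − 1 > k + 2, the greedy algorithm is not online optimal on G_{n,k}. -/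
namespace OnlinePaper

variable {V : Type}

/-! ### Online Maximal Forest -/

/-- The graph on the revealed vertices described by a Boolean adjacency matrix. -/
def matrixGraph {n : ℕ} (M : Fin n → Fin n → Bool) : SimpleGraph (Fin n) where
  Adj a b := a ≠ b ∧ (M a b = true ∨ M b a = true)
  symm := ⟨fun _ _ h => ⟨h.1.symm, h.2.symm⟩⟩
  loopless := ⟨fun _ h => h.1 rfl⟩

/-- `s` induces an acyclic subgraph (a forest) of `G`. -/
def IsForestSet (G : SimpleGraph V) (s : Finset V) : Prop :=
  (G.induce (↑s : Set V)).IsAcyclic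

/-- The greedy decision for Online Maximal Forest: accept the newly revealed vertex iff the
previously accepted vertices together with the new vertex still induce an acyclic subgraph
of the revealed graph. -/
noncomputable def gfAux : (n : ℕ) → (Fin (n + 1) → Fin (n + 1) → Bool) → Bool
  | n, M => by
    classical
    exact decide (((matrixGraph M).induce
      {a : Fin (n + 1) | a = Fin.last n ∨ ∃ h : a.val < n,
        gfAux a.val (fun x y => M (Fin.castLE (Nat.succ_le_succ h.le) x)
          (Fin.castLE (Nat.succ_le_succ h.le) y)) = true}).IsAcyclic)
termination_by n => n
decreasing_by all_goals exact h

/-- `GF`, the greedy algorithm for Online Maximal Forest. -/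
noncomputable def gfAlg : OnlineAlg := fun n M => gfAux n M

/-- The graph `G_{n,k}`: vertices `x = inl (inl true)`, `y = inl (inl false)`,
`v_i = inl (inr i)` for `i < n`, and `k` further isolated vertices `inr j`; edges `{x, y}`
and `{x, v_i}`, `{y, v_i}` for all `i`. -/
def gnkGraph (n k : ℕ) : SimpleGraph ((Bool ⊕ Fin n) ⊕ Fin k) where
  Adj a b :=
    (∃ u v : Bool, u ≠ v ∧ a = Sum.inl (Sum.inl u) ∧ b = Sum.inl (Sum.inl v)) ∨
    (∃ (u : Bool) (i : Fin n), a = Sum.inl (Sum.inl u) ∧ b = Sum.inl (Sum.inr i)) ∨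
    (∃ (u : Bool) (i : Fin n), a = Sum.inl (Sum.inr i) ∧ b = Sum.inl (Sum.inl u))
  symm := by
    refine ⟨?_⟩
    rintro a b (⟨u, v, huv, ha, hb⟩ | ⟨u, i, ha, hb⟩ | ⟨u, i, ha, hb⟩)
    · exact Or.inl ⟨v, u, huv.symm, hb, ha⟩
    · exact Or.inr (Or.inr ⟨u, i, hb, ha⟩)
    · exact Or.inr (Or.inl ⟨u, i, hb, ha⟩)
  loopless := by
    refine ⟨?_⟩
    rintro a (⟨u, v, huv, ha, hb⟩ | ⟨u, i, ha, hb⟩ | ⟨u, i, ha, hb⟩) <;> subst ha <;> simp_all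


/-! ### Auxiliary general graph lemmas -/

section AcyclicLemmas

variable {W W' : Type}

lemma isAcyclic_of_embedding {H : SimpleGraph W} {G : SimpleGraph W'} (f : H ↪g G)
    (hG : G.IsAcyclic) : H.IsAcyclic := by
  intro v c hc
  exact hG (c.map f.toHom) (hc.map f.injective)

lemma isAcyclic_of_no_adj {H : SimpleGraph W} (h : ∀ a b, ¬ H.Adj a b) : H.IsAcyclic := by
  intro v c hc
  cases c with
  | nil => exact hc.ne_nil rfl
  | cons hadj p => exact h _ _ hadj

lemma isAcyclic_star {H : SimpleGraph W} (z : W)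
    (h : ∀ a b, H.Adj a b → a = z ∨ b = z) : H.IsAcyclic := by
  intro v c hc
  have h3 := hc.three_le_length
  have hnd := hc.2
  match c, hc, h3, hnd with
  | SimpleGraph.Walk.cons h1 (SimpleGraph.Walk.cons h2 q), hc, h3, hnd =>
    rename_i u w
    simp only [SimpleGraph.Walk.support_cons, List.tail_cons] at hnd
    rcases h _ _ h2 with hu | hw
    · cases q with
      | nil => simp [SimpleGraph.Walk.length_cons] at h3
      | cons h4 r =>
        rename_i t
        rcases h _ _ h4 with hw2 | ht
        · exact h2.ne (hu.trans hw2.symm)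
        · have hut : u = t := hu.trans ht.symm
          rw [List.nodup_cons] at hnd
          refine hnd.1 ?_
          rw [hut]
          exact List.mem_cons_of_mem _ r.start_mem_support
    · rcases h _ _ h1 with hv | hu
      · have hwv : w = v := by rw [hw, ← hv]
        cases q with
        | nil => simp [SimpleGraph.Walk.length_cons] at h3
        | cons h4 r =>
          simp only [SimpleGraph.Walk.support_cons, List.nodup_cons, List.mem_cons] at hnd
          refine hnd.2.1 ?_
          rw [hwv]
          exact r.end_mem_support
      · exact h2.ne (hu.trans hw.symm)

lemma not_isAcyclic_of_triangle {H : SimpleGraph W} {a b c : W}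
    (hab : H.Adj a b) (hac : H.Adj a c) (hbc : H.Adj b c) : ¬ H.IsAcyclic := by
  classical
  obtain ⟨u, w, hcyc, -⟩ := SimpleGraph.is3Clique_iff_exists_cycle_length_three.mp
    ⟨{a, b, c}, SimpleGraph.is3Clique_triple_iff.mpr ⟨hab, hac, hbc⟩⟩
  exact fun h => h w hcyc

lemma isAcyclic_iff_of_iso {H : SimpleGraph W} {G : SimpleGraph W'} (e : H ≃g G) :
    H.IsAcyclic ↔ G.IsAcyclic :=
  ⟨fun h => isAcyclic_of_embedding e.symm.toEmbedding h,
   fun h => isAcyclic_of_embedding e.toEmbedding h⟩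

/-- The natural isomorphism between an induced subgraph of a comap and the induced
subgraph on the image. -/
noncomputable def comapInduceIso {W W' : Type} (G : SimpleGraph W') (f : W → W')
    (hf : Function.Injective f) (T : Set W) :
    ((SimpleGraph.comap f G).induce T) ≃g (G.induce (f '' T)) where
  toEquiv := Equiv.Set.image f T hf
  map_rel_iff' := Iff.rfl

end AcyclicLemmas

/-! ### Run-level definitions -/

section Run

variable {V : Type} [Fintype V] (G : SimpleGraph V) (φ : Fin (Fintype.card V) ≃ V)

/-- The map from indices of revealed vertices at step `i` to actual vertices. -/
def fmap (i : Fin (Fintype.card V)) (a : Fin (i.val + 1)) : V :=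
  φ ⟨a.val, by have := a.isLt; have := i.isLt; omega⟩

lemma fmap_injective (i : Fin (Fintype.card V)) : Function.Injective (fmap φ i) := by
  intro a b h
  have := φ.injective h
  have h2 := congrArg Fin.val this
  exact Fin.ext h2

/-- The set of vertices revealed at step `i` (inclusive). -/
def RSet (i : Fin (Fintype.card V)) : Set V := {v | φ.symm v ≤ i}

/-- The previously accepted vertices together with the vertex revealed at step `i`. -/
def SSet (A : OnlineAlg) (G : SimpleGraph V) (φ : Fin (Fintype.card V) ≃ V)
    (i : Fin (Fintype.card V)) : Set V :=
  {v | φ.symm v = i ∨ (φ.symm v < i ∧ accepts A G φ (φ.symm v) = true)}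

lemma fmap_last (i : Fin (Fintype.card V)) : fmap φ i (Fin.last i.val) = φ i := rfl

lemma fmap_mem_RSet (i : Fin (Fintype.card V)) (a : Fin (i.val + 1)) :
    fmap φ i a ∈ RSet φ i := by
  show φ.symm (φ _) ≤ i
  rw [Equiv.symm_apply_apply]
  exact Fin.mk_le_of_le_val (Nat.lt_succ_iff.mp a.isLt)

lemma exists_fmap_eq {i : Fin (Fintype.card V)} {u : V} (hu : u ∈ RSet φ i) :
    ∃ a : Fin (i.val + 1), fmap φ i a = u := by
  refine ⟨⟨(φ.symm u).val, by have : (φ.symm u).val ≤ i.val := hu; omega⟩, ?_⟩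
  show φ _ = u
  rw [show (⟨(φ.symm u).val, _⟩ : Fin (Fintype.card V)) = φ.symm u from Fin.ext rfl]
  exact φ.apply_symm_apply u

lemma revealedMatrix_true_iff (i : Fin (Fintype.card V)) (a b : Fin (i.val + 1)) :
    revealedMatrix G φ i a b = true ↔ G.Adj (fmap φ i a) (fmap φ i b) := by
  rw [revealedMatrix]
  exact Iff.of_eq (@decide_eq_true_eq _ (Classical.propDecidable _))

lemma matrixGraph_revealedMatrix (i : Fin (Fintype.card V)) :
    matrixGraph (revealedMatrix G φ i) = SimpleGraph.comap (fmap φ i) G := by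
  ext a b
  show (a ≠ b ∧ _) ↔ G.Adj (fmap φ i a) (fmap φ i b)
  constructor
  · rintro ⟨hab, h | h⟩
    · exact (revealedMatrix_true_iff G φ i a b).mp h
    · exact ((revealedMatrix_true_iff G φ i b a).mp h).symm
  · intro h
    refine ⟨fun hab => h.ne (by rw [hab]), Or.inl ((revealedMatrix_true_iff G φ i a b).mpr h)⟩

lemma revealedMatrix_restrict (i : Fin (Fintype.card V)) (a : ℕ) (h : a < i.val) :
    (fun x y => revealedMatrix G φ i (Fin.castLE (Nat.succ_le_succ h.le) x)
      (Fin.castLE (Nat.succ_le_succ h.le) y)) =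
    revealedMatrix G φ ⟨a, lt_trans h i.isLt⟩ := rfl

end Run

/-! ### The greedy forest algorithm, step characterization -/

section MasterGF

variable {V : Type} [Fintype V] (G : SimpleGraph V) (φ : Fin (Fintype.card V) ≃ V)

lemma fmap_image_SSet (A : OnlineAlg) (AuxFn : (n : ℕ) → (Fin (n + 1) → Fin (n + 1) → Bool) → Bool)
    (hA : A = fun n M => AuxFn n M) (i : Fin (Fintype.card V)) :
    fmap φ i '' {a : Fin (i.val + 1) | a = Fin.last i.val ∨ ∃ h : a.val < i.val,
        AuxFn a.val (fun x y => revealedMatrix G φ i (Fin.castLE (Nat.succ_le_succ h.le) x)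
          (Fin.castLE (Nat.succ_le_succ h.le) y)) = true} = SSet A G φ i := by
  subst hA
  ext v
  simp only [Set.mem_image, Set.mem_setOf_eq, SSet]
  constructor
  · rintro ⟨a, ha, rfl⟩
    rcases ha with rfl | ⟨h, hacc⟩
    · left
      rw [fmap_last, Equiv.symm_apply_apply]
    · right
      rw [fmap, Equiv.symm_apply_apply]
      refine ⟨h, ?_⟩
      exact hacc
  · rintro (h | ⟨hlt, hacc⟩)
    · refine ⟨Fin.last i.val, Or.inl rfl, ?_⟩
      rw [fmap_last]
      exact ((Equiv.symm_apply_eq φ).mp h).symm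
    · refine ⟨⟨(φ.symm v).val, by have : (φ.symm v).val < i.val := hlt; omega⟩,
        Or.inr ⟨hlt, ?_⟩, ?_⟩
      · exact hacc
      · show φ _ = v
        rw [show (⟨(φ.symm v).val, _⟩ : Fin (Fintype.card V)) = φ.symm v from Fin.ext rfl]
        exact φ.apply_symm_apply v

lemma accepts_gf_iff (i : Fin (Fintype.card V)) :
    accepts gfAlg G φ i = true ↔ (G.induce (SSet gfAlg G φ i)).IsAcyclic := by
  show gfAux i.val (revealedMatrix G φ i) = true ↔ _
  rw [gfAux]
  rw [@decide_eq_true_eq _ (Classical.propDecidable _)]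
  rw [matrixGraph_revealedMatrix G φ i]
  rw [isAcyclic_iff_of_iso (comapInduceIso G (fmap φ i) (fmap_injective φ i) _)]
  rw [fmap_image_SSet G φ gfAlg gfAux rfl i]

end MasterGF

/-! ### The improved algorithm for Online Maximal Forest -/

/-- Adjacency as seen in a revealed Boolean matrix. -/
def MAdj {m : ℕ} (M : Fin m → Fin m → Bool) (a b : Fin m) : Prop :=
  a ≠ b ∧ (M a b = true ∨ M b a = true)

/-- First rejection rule: the new vertex has a revealed neighbor and there are exactly two
revealed vertices of positive degree. -/
def MRule1 {n : ℕ} (M : Fin (n + 1) → Fin (n + 1) → Bool) : Prop :=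
  (∃ u, MAdj M (Fin.last n) u) ∧
    ∃ a b, a ≠ b ∧ (∃ x, MAdj M a x) ∧ (∃ x, MAdj M b x) ∧
      ∀ c, (∃ x, MAdj M c x) → c = a ∨ c = b

/-- Second rejection rule: the new vertex has exactly two revealed neighbors, they are
adjacent, and all other revealed vertices have degree zero. -/
def MRule2 {n : ℕ} (M : Fin (n + 1) → Fin (n + 1) → Bool) : Prop :=
  ∃ a b, a ≠ b ∧ MAdj M a (Fin.last n) ∧ MAdj M b (Fin.last n) ∧ MAdj M a b ∧
    (∀ c, MAdj M c (Fin.last n) → c = a ∨ c = b) ∧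
    (∀ c, (∃ x, MAdj M c x) → c = a ∨ c = b ∨ c = Fin.last n)

/-- Safety: the accepted set together with the new vertex contains no triangle. -/
def MSafety {n : ℕ} (M : Fin (n + 1) → Fin (n + 1) → Bool) (S : Set (Fin (n + 1))) : Prop :=
  ¬ ∃ a b c, a ∈ S ∧ b ∈ S ∧ c ∈ S ∧ MAdj M a b ∧ MAdj M a c ∧ MAdj M b c

/-- The decision function of the improved algorithm. -/
noncomputable def myAux : (n : ℕ) → (Fin (n + 1) → Fin (n + 1) → Bool) → Bool
  | n, M => by
    classical
    exact decide (¬ MRule1 M ∧ ¬ MRule2 M ∧ MSafety M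
      {a : Fin (n + 1) | a = Fin.last n ∨ ∃ h : a.val < n,
        myAux a.val (fun x y => M (Fin.castLE (Nat.succ_le_succ h.le) x)
          (Fin.castLE (Nat.succ_le_succ h.le) y)) = true})
termination_by n => n
decreasing_by all_goals exact h

/-- The improved online algorithm for Online Maximal Forest. -/
noncomputable def myAlg : OnlineAlg := fun n M => myAux n M

section RulesG

variable {V : Type} [Fintype V] (G : SimpleGraph V) (φ : Fin (Fintype.card V) ≃ V)

/-- `u` is revealed at step `i` and has a revealed neighbor. -/
def PosG (i : Fin (Fintype.card V)) (u : V) : Prop :=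
  u ∈ RSet φ i ∧ ∃ u', u' ∈ RSet φ i ∧ G.Adj u u'

def Rule1G (i : Fin (Fintype.card V)) : Prop :=
  (∃ u, u ∈ RSet φ i ∧ G.Adj (φ i) u) ∧
    ∃ a b, a ≠ b ∧ PosG G φ i a ∧ PosG G φ i b ∧ ∀ c, PosG G φ i c → c = a ∨ c = b

def Rule2G (i : Fin (Fintype.card V)) : Prop :=
  ∃ a b, a ≠ b ∧ (a ∈ RSet φ i ∧ G.Adj a (φ i)) ∧ (b ∈ RSet φ i ∧ G.Adj b (φ i)) ∧ G.Adj a b ∧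
    (∀ c, c ∈ RSet φ i → G.Adj c (φ i) → c = a ∨ c = b) ∧
    (∀ c, PosG G φ i c → c = a ∨ c = b ∨ c = φ i)

def SafetyG (A : OnlineAlg) (G : SimpleGraph V) (φ : Fin (Fintype.card V) ≃ V)
    (i : Fin (Fintype.card V)) : Prop :=
  ¬ ∃ a b c, a ∈ SSet A G φ i ∧ b ∈ SSet A G φ i ∧ c ∈ SSet A G φ i ∧
    G.Adj a b ∧ G.Adj a c ∧ G.Adj b c

end RulesG

section MasterMy

variable {V : Type} [Fintype V] (G : SimpleGraph V) (φ : Fin (Fintype.card V) ≃ V)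
  (i : Fin (Fintype.card V))

lemma MAdj_revealed (a b : Fin (i.val + 1)) :
    MAdj (revealedMatrix G φ i) a b ↔ G.Adj (fmap φ i a) (fmap φ i b) := by
  constructor
  · rintro ⟨hab, h | h⟩
    · exact (revealedMatrix_true_iff G φ i a b).mp h
    · exact ((revealedMatrix_true_iff G φ i b a).mp h).symm
  · intro h
    exact ⟨fun e => h.ne (congrArg _ e), Or.inl ((revealedMatrix_true_iff G φ i a b).mpr h)⟩

lemma MPos_revealed (a : Fin (i.val + 1)) :
    (∃ x, MAdj (revealedMatrix G φ i) a x) ↔ PosG G φ i (fmap φ i a) := by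
  constructor
  · rintro ⟨x, hx⟩
    exact ⟨fmap_mem_RSet φ i a, fmap φ i x, fmap_mem_RSet φ i x, (MAdj_revealed G φ i a x).mp hx⟩
  · rintro ⟨-, u', hu', hadj⟩
    obtain ⟨x, rfl⟩ := exists_fmap_eq φ hu'
    exact ⟨x, (MAdj_revealed G φ i a x).mpr hadj⟩

lemma MRule1_revealed : MRule1 (revealedMatrix G φ i) ↔ Rule1G G φ i := by
  constructor
  · rintro ⟨⟨u, hu⟩, a, b, hab, ha, hb, huniq⟩
    refine ⟨⟨fmap φ i u, fmap_mem_RSet φ i u,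
        (MAdj_revealed G φ i (Fin.last i.val) u).mp hu⟩,
      fmap φ i a, fmap φ i b, fun e => hab (fmap_injective φ i e),
      (MPos_revealed G φ i a).mp ha, (MPos_revealed G φ i b).mp hb, ?_⟩
    intro c hc
    obtain ⟨x, rfl⟩ := exists_fmap_eq φ hc.1
    rcases huniq x ((MPos_revealed G φ i x).mpr hc) with rfl | rfl
    · exact Or.inl rfl
    · exact Or.inr rfl
  · rintro ⟨⟨u, hu, hadj⟩, a, b, hab, ha, hb, huniq⟩
    obtain ⟨uu, rfl⟩ := exists_fmap_eq φ hu
    obtain ⟨ua, rfl⟩ := exists_fmap_eq φ ha.1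
    obtain ⟨ub, rfl⟩ := exists_fmap_eq φ hb.1
    refine ⟨⟨uu, (MAdj_revealed G φ i (Fin.last i.val) uu).mpr hadj⟩,
      ua, ub, fun e => hab (congrArg _ e),
      (MPos_revealed G φ i ua).mpr ha, (MPos_revealed G φ i ub).mpr hb, ?_⟩
    intro c hc
    rcases huniq (fmap φ i c) ((MPos_revealed G φ i c).mp hc) with h | h
    · exact Or.inl (fmap_injective φ i h)
    · exact Or.inr (fmap_injective φ i h)

lemma MRule2_revealed : MRule2 (revealedMatrix G φ i) ↔ Rule2G G φ i := by
  constructor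
  · rintro ⟨a, b, hab, haw, hbw, hadj, huniq1, huniq2⟩
    refine ⟨fmap φ i a, fmap φ i b, fun e => hab (fmap_injective φ i e),
      ⟨fmap_mem_RSet φ i a, (MAdj_revealed G φ i a (Fin.last i.val)).mp haw⟩,
      ⟨fmap_mem_RSet φ i b, (MAdj_revealed G φ i b (Fin.last i.val)).mp hbw⟩,
      (MAdj_revealed G φ i a b).mp hadj, ?_, ?_⟩
    · intro c hc hcw
      obtain ⟨x, rfl⟩ := exists_fmap_eq φ hc
      rcases huniq1 x ((MAdj_revealed G φ i x (Fin.last i.val)).mpr hcw) with rfl | rfl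
      · exact Or.inl rfl
      · exact Or.inr rfl
    · intro c hc
      obtain ⟨x, rfl⟩ := exists_fmap_eq φ hc.1
      rcases huniq2 x ((MPos_revealed G φ i x).mpr hc) with rfl | rfl | rfl
      · exact Or.inl rfl
      · exact Or.inr (Or.inl rfl)
      · exact Or.inr (Or.inr rfl)
  · rintro ⟨a, b, hab, ⟨haR, haw⟩, ⟨hbR, hbw⟩, hadj, huniq1, huniq2⟩
    obtain ⟨ua, rfl⟩ := exists_fmap_eq φ haR
    obtain ⟨ub, rfl⟩ := exists_fmap_eq φ hbR
    refine ⟨ua, ub, fun e => hab (congrArg _ e),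
      (MAdj_revealed G φ i ua (Fin.last i.val)).mpr haw,
      (MAdj_revealed G φ i ub (Fin.last i.val)).mpr hbw,
      (MAdj_revealed G φ i ua ub).mpr hadj, ?_, ?_⟩
    · intro c hc
      rcases huniq1 (fmap φ i c) (fmap_mem_RSet φ i c)
          ((MAdj_revealed G φ i c (Fin.last i.val)).mp hc) with h | h
      · exact Or.inl (fmap_injective φ i h)
      · exact Or.inr (fmap_injective φ i h)
    · intro c hc
      rcases huniq2 (fmap φ i c) ((MPos_revealed G φ i c).mp hc) with h | h | h
      · exact Or.inl (fmap_injective φ i h)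
      · exact Or.inr (Or.inl (fmap_injective φ i h))
      · exact Or.inr (Or.inr (fmap_injective φ i h))

lemma SSet_subset_RSet (A : OnlineAlg) : SSet A G φ i ⊆ RSet φ i := by
  rintro v (h | ⟨h, -⟩)
  · exact le_of_eq h
  · exact le_of_lt h

lemma mem_S_iff_my (a : Fin (i.val + 1)) :
    (a ∈ {a : Fin (i.val + 1) | a = Fin.last i.val ∨ ∃ h : a.val < i.val,
        myAux a.val (fun x y => revealedMatrix G φ i (Fin.castLE (Nat.succ_le_succ h.le) x)
          (Fin.castLE (Nat.succ_le_succ h.le) y)) = true}) ↔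
      fmap φ i a ∈ SSet myAlg G φ i := by
  rw [← fmap_image_SSet G φ myAlg myAux rfl i]
  constructor
  · intro h
    exact Set.mem_image_of_mem _ h
  · rintro ⟨a', ha', he⟩
    rwa [← fmap_injective φ i he]

lemma MSafety_revealed :
    MSafety (revealedMatrix G φ i)
      {a : Fin (i.val + 1) | a = Fin.last i.val ∨ ∃ h : a.val < i.val,
        myAux a.val (fun x y => revealedMatrix G φ i (Fin.castLE (Nat.succ_le_succ h.le) x)
          (Fin.castLE (Nat.succ_le_succ h.le) y)) = true} ↔ SafetyG myAlg G φ i := by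
  rw [MSafety, SafetyG, not_iff_not]
  constructor
  · rintro ⟨a, b, c, ha, hb, hc, h1, h2, h3⟩
    exact ⟨fmap φ i a, fmap φ i b, fmap φ i c,
      (mem_S_iff_my G φ i a).mp ha, (mem_S_iff_my G φ i b).mp hb, (mem_S_iff_my G φ i c).mp hc,
      (MAdj_revealed G φ i a b).mp h1, (MAdj_revealed G φ i a c).mp h2,
      (MAdj_revealed G φ i b c).mp h3⟩
  · rintro ⟨x, y, z, hx, hy, hz, h1, h2, h3⟩
    obtain ⟨a, rfl⟩ := exists_fmap_eq φ (SSet_subset_RSet G φ i myAlg hx)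
    obtain ⟨b, rfl⟩ := exists_fmap_eq φ (SSet_subset_RSet G φ i myAlg hy)
    obtain ⟨c, rfl⟩ := exists_fmap_eq φ (SSet_subset_RSet G φ i myAlg hz)
    exact ⟨a, b, c, (mem_S_iff_my G φ i a).mpr hx, (mem_S_iff_my G φ i b).mpr hy,
      (mem_S_iff_my G φ i c).mpr hz, (MAdj_revealed G φ i a b).mpr h1,
      (MAdj_revealed G φ i a c).mpr h2, (MAdj_revealed G φ i b c).mpr h3⟩

lemma accepts_my_iff :
    accepts myAlg G φ i = true ↔
      ¬ Rule1G G φ i ∧ ¬ Rule2G G φ i ∧ SafetyG myAlg G φ i := by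
  show myAux i.val (revealedMatrix G φ i) = true ↔ _
  rw [myAux]
  simp only [decide_eq_true_eq]
  rw [MRule1_revealed, MRule2_revealed, MSafety_revealed]

end MasterMy

/-! ### Structure of the graph `G_{n,k}` -/

section Gnk

variable {n k : ℕ}

/-- The vertex `x`. -/
abbrev pX : (Bool ⊕ Fin n) ⊕ Fin k := Sum.inl (Sum.inl true)
/-- The vertex `y`. -/
abbrev pY : (Bool ⊕ Fin n) ⊕ Fin k := Sum.inl (Sum.inl false)
/-- The vertex `v_j`. -/
abbrev pV (j : Fin n) : (Bool ⊕ Fin n) ⊕ Fin k := Sum.inl (Sum.inr j)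

lemma pX_ne_pY : (pX : (Bool ⊕ Fin n) ⊕ Fin k) ≠ pY := by simp

lemma pX_ne_pV (j : Fin n) : (pX : (Bool ⊕ Fin n) ⊕ Fin k) ≠ pV j := by simp

lemma pY_ne_pV (j : Fin n) : (pY : (Bool ⊕ Fin n) ⊕ Fin k) ≠ pV j := by simp

lemma gnk_adj_iff {a b : (Bool ⊕ Fin n) ⊕ Fin k} :
    (gnkGraph n k).Adj a b ↔
      (a = pX ∧ b = pY) ∨ (a = pY ∧ b = pX) ∨
        (∃ j, (a = pX ∨ a = pY) ∧ b = pV j) ∨ (∃ j, a = pV j ∧ (b = pX ∨ b = pY)) := by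
  constructor
  · rintro (⟨u, v, huv, rfl, rfl⟩ | ⟨u, j, rfl, rfl⟩ | ⟨u, j, rfl, rfl⟩)
    · cases u <;> cases v <;> simp_all
    · cases u
      · exact Or.inr (Or.inr (Or.inl ⟨j, Or.inr rfl, rfl⟩))
      · exact Or.inr (Or.inr (Or.inl ⟨j, Or.inl rfl, rfl⟩))
    · cases u
      · exact Or.inr (Or.inr (Or.inr ⟨j, rfl, Or.inr rfl⟩))
      · exact Or.inr (Or.inr (Or.inr ⟨j, rfl, Or.inl rfl⟩))
  · rintro (⟨rfl, rfl⟩ | ⟨rfl, rfl⟩ | ⟨j, (rfl | rfl), rfl⟩ | ⟨j, rfl, (rfl | rfl)⟩)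
    · exact Or.inl ⟨true, false, by simp, rfl, rfl⟩
    · exact Or.inl ⟨false, true, by simp, rfl, rfl⟩
    · exact Or.inr (Or.inl ⟨true, j, rfl, rfl⟩)
    · exact Or.inr (Or.inl ⟨false, j, rfl, rfl⟩)
    · exact Or.inr (Or.inr ⟨true, j, rfl, rfl⟩)
    · exact Or.inr (Or.inr ⟨false, j, rfl, rfl⟩)

lemma gnk_adj_XY : (gnkGraph n k).Adj pX pY := Or.inl ⟨true, false, by simp, rfl, rfl⟩

lemma gnk_adj_XV (j : Fin n) : (gnkGraph n k).Adj pX (pV j) :=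
  Or.inr (Or.inl ⟨true, j, rfl, rfl⟩)

lemma gnk_adj_YV (j : Fin n) : (gnkGraph n k).Adj pY (pV j) :=
  Or.inr (Or.inl ⟨false, j, rfl, rfl⟩)

lemma gnk_adj_form {a b : (Bool ⊕ Fin n) ⊕ Fin k} (h : (gnkGraph n k).Adj a b) :
    (a = pX ∨ a = pY) ∨ ∃ j, a = pV j := by
  rcases gnk_adj_iff.mp h with ⟨rfl, -⟩ | ⟨rfl, -⟩ | ⟨j, h, -⟩ | ⟨j, rfl, -⟩
  · exact Or.inl (Or.inl rfl)
  · exact Or.inl (Or.inr rfl)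
  · exact Or.inl h
  · exact Or.inr ⟨j, rfl⟩

lemma gnk_adj_xy_mem {a b : (Bool ⊕ Fin n) ⊕ Fin k} (h : (gnkGraph n k).Adj a b) :
    a = pX ∨ a = pY ∨ b = pX ∨ b = pY := by
  rcases gnk_adj_iff.mp h with ⟨rfl, -⟩ | ⟨rfl, -⟩ | ⟨j, h2, -⟩ | ⟨j, -, h2⟩
  · exact Or.inl rfl
  · exact Or.inr (Or.inl rfl)
  · rcases h2 with rfl | rfl
    · exact Or.inl rfl
    · exact Or.inr (Or.inl rfl)
  · rcases h2 with rfl | rfl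
    · exact Or.inr (Or.inr (Or.inl rfl))
    · exact Or.inr (Or.inr (Or.inr rfl))

lemma gnk_triangle {S : Set ((Bool ⊕ Fin n) ⊕ Fin k)} {a b c : (Bool ⊕ Fin n) ⊕ Fin k}
    (ha : a ∈ S) (hb : b ∈ S) (hc : c ∈ S)
    (hab : (gnkGraph n k).Adj a b) (hac : (gnkGraph n k).Adj a c)
    (hbc : (gnkGraph n k).Adj b c) :
    pX ∈ S ∧ pY ∈ S ∧ ∃ j, pV j ∈ S := by
  have hCab := gnk_adj_xy_mem hab
  have hCac := gnk_adj_xy_mem hac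
  have hCbc := gnk_adj_xy_mem hbc
  have hFa := gnk_adj_form hab
  have hFb := gnk_adj_form hbc
  have hFc := gnk_adj_form hac.symm
  have hone : ∀ z : (Bool ⊕ Fin n) ⊕ Fin k,
      (a = z ∨ b = z ∨ c = z) → z ∈ S := by
    rintro z (rfl | rfl | rfl) <;> assumption
  have hX : a = pX ∨ b = pX ∨ c = pX := by
    by_contra hno
    push_neg at hno
    obtain ⟨hna, hnb, hnc⟩ := hno
    have h1 : a = pY ∨ b = pY := by
      rcases hCab with h | h | h | h
      exacts [absurd h hna, Or.inl h, absurd h hnb, Or.inr h]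
    have h2 : a = pY ∨ c = pY := by
      rcases hCac with h | h | h | h
      exacts [absurd h hna, Or.inl h, absurd h hnc, Or.inr h]
    have h3 : b = pY ∨ c = pY := by
      rcases hCbc with h | h | h | h
      exacts [absurd h hnb, Or.inl h, absurd h hnc, Or.inr h]
    rcases h1 with rfl | rfl
    · rcases h3 with rfl | rfl
      · exact hab.ne rfl
      · exact hac.ne rfl
    · rcases h2 with rfl | rfl
      · exact hab.ne rfl
      · exact hbc.ne rfl
  have hY : a = pY ∨ b = pY ∨ c = pY := by
    by_contra hno
    push_neg at hno
    obtain ⟨hna, hnb, hnc⟩ := hno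
    have h1 : a = pX ∨ b = pX := by
      rcases hCab with h | h | h | h
      exacts [Or.inl h, absurd h hna, Or.inr h, absurd h hnb]
    have h2 : a = pX ∨ c = pX := by
      rcases hCac with h | h | h | h
      exacts [Or.inl h, absurd h hna, Or.inr h, absurd h hnc]
    have h3 : b = pX ∨ c = pX := by
      rcases hCbc with h | h | h | h
      exacts [Or.inl h, absurd h hnb, Or.inr h, absurd h hnc]
    rcases h1 with rfl | rfl
    · rcases h3 with rfl | rfl
      · exact hab.ne rfl
      · exact hac.ne rfl
    · rcases h2 with rfl | rfl
      · exact hab.ne rfl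
      · exact hbc.ne rfl
  have hV : ∃ j, a = pV j ∨ b = pV j ∨ c = pV j := by
    by_contra hno
    push_neg at hno
    have hfa : a = pX ∨ a = pY := by
      rcases hFa with h | ⟨j, rfl⟩
      · exact h
      · exact absurd rfl (hno j).1
    have hfb : b = pX ∨ b = pY := by
      rcases hFb with h | ⟨j, rfl⟩
      · exact h
      · exact absurd rfl (hno j).2.1
    have hfc : c = pX ∨ c = pY := by
      rcases hFc with h | ⟨j, rfl⟩
      · exact h
      · exact absurd rfl (hno j).2.2
    rcases hfa with rfl | rfl <;> rcases hfb with rfl | rfl <;> rcases hfc with rfl | rfl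
    · exact hab.ne rfl
    · exact hab.ne rfl
    · exact hac.ne rfl
    · exact hbc.ne rfl
    · exact hbc.ne rfl
    · exact hac.ne rfl
    · exact hab.ne rfl
    · exact hab.ne rfl
  obtain ⟨j, hj⟩ := hV
  exact ⟨hone pX hX, hone pY hY, j, hone (pV j) hj⟩

lemma gnk_isAcyclic_iff (S : Set ((Bool ⊕ Fin n) ⊕ Fin k)) :
    ((gnkGraph n k).induce S).IsAcyclic ↔ ¬ (pX ∈ S ∧ pY ∈ S ∧ ∃ j, pV j ∈ S) := by
  constructor
  · intro hacy
    rintro ⟨hX, hY, j, hV⟩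
    refine not_isAcyclic_of_triangle (a := ⟨pX, hX⟩) (b := ⟨pY, hY⟩) (c := ⟨pV j, hV⟩)
      ?_ ?_ ?_ hacy
    · exact gnk_adj_XY
    · exact gnk_adj_XV j
    · exact gnk_adj_YV j
  · intro hP
    by_cases hX : pX ∈ S
    · by_cases hY : pY ∈ S
      · have hnoV : ∀ j, pV j ∉ S := fun j hj => hP ⟨hX, hY, j, hj⟩
        refine isAcyclic_star (⟨pX, hX⟩ : S) ?_
        rintro ⟨a, haS⟩ ⟨b, hbS⟩ hadj
        rcases gnk_adj_iff.mp hadj with ⟨rfl, rfl⟩ | ⟨rfl, rfl⟩ | ⟨j, -, rfl⟩ | ⟨j, rfl, -⟩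
        · exact Or.inl rfl
        · exact Or.inr rfl
        · exact absurd hbS (hnoV j)
        · exact absurd haS (hnoV j)
      · refine isAcyclic_star (⟨pX, hX⟩ : S) ?_
        rintro ⟨a, haS⟩ ⟨b, hbS⟩ hadj
        rcases gnk_adj_iff.mp hadj with ⟨rfl, rfl⟩ | ⟨rfl, rfl⟩ | ⟨j, hf, rfl⟩ | ⟨j, rfl, hf⟩
        · exact absurd hbS hY
        · exact absurd haS hY
        · rcases hf with rfl | rfl
          · exact Or.inl rfl
          · exact absurd haS hY
        · rcases hf with rfl | rfl
          · exact Or.inr rfl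
          · exact absurd hbS hY
    · by_cases hY : pY ∈ S
      · refine isAcyclic_star (⟨pY, hY⟩ : S) ?_
        rintro ⟨a, haS⟩ ⟨b, hbS⟩ hadj
        rcases gnk_adj_iff.mp hadj with ⟨rfl, rfl⟩ | ⟨rfl, rfl⟩ | ⟨j, hf, rfl⟩ | ⟨j, rfl, hf⟩
        · exact absurd haS hX
        · exact absurd hbS hX
        · rcases hf with rfl | rfl
          · exact absurd haS hX
          · exact Or.inl rfl
        · rcases hf with rfl | rfl
          · exact absurd hbS hX
          · exact Or.inr rfl
      · refine isAcyclic_of_no_adj ?_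
        rintro ⟨a, haS⟩ ⟨b, hbS⟩ hadj
        rcases gnk_adj_xy_mem hadj with rfl | rfl | rfl | rfl
        · exact hX haS
        · exact hY haS
        · exact hX hbS
        · exact hY hbS

end Gnk

/-! ### Generic facts about `SSet` -/

section SSetFacts

variable {V : Type} [Fintype V] {A : OnlineAlg} {G : SimpleGraph V}
  {φ : Fin (Fintype.card V) ≃ V} {i : Fin (Fintype.card V)}

lemma self_mem_SSet : φ i ∈ SSet A G φ i := Or.inl (φ.symm_apply_apply i)

lemma mem_SSet_of_acc {v : V} (h1 : φ.symm v < i) (h2 : accepts A G φ (φ.symm v) = true) :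
    v ∈ SSet A G φ i := Or.inr ⟨h1, h2⟩

lemma of_mem_SSet {v : V} (h : v ∈ SSet A G φ i) :
    v = φ i ∨ (φ.symm v < i ∧ accepts A G φ (φ.symm v) = true) := by
  rcases h with h | h
  · exact Or.inl ((Equiv.symm_apply_eq φ).mp h)
  · exact Or.inr h

end SSetFacts

/-! ### The greedy forest algorithm on `G_{n,k}` -/

section GfGnk

variable {n k : ℕ}

lemma accepts_gf_gnk_iff (φ : Fin (Fintype.card ((Bool ⊕ Fin n) ⊕ Fin k)) ≃ ((Bool ⊕ Fin n) ⊕ Fin k))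
    (i : Fin (Fintype.card ((Bool ⊕ Fin n) ⊕ Fin k))) :
    accepts gfAlg (gnkGraph n k) φ i = true ↔
      ¬ (pX ∈ SSet gfAlg (gnkGraph n k) φ i ∧ pY ∈ SSet gfAlg (gnkGraph n k) φ i ∧
        ∃ j, pV j ∈ SSet gfAlg (gnkGraph n k) φ i) :=
  (accepts_gf_iff _ _ i).trans (gnk_isAcyclic_iff _)

variable (φ : Fin (Fintype.card ((Bool ⊕ Fin n) ⊕ Fin k)) ≃ ((Bool ⊕ Fin n) ⊕ Fin k))

/-- The set of vertices accepted by `GF` among the first `m` revealed. -/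
def gfPrev (m : ℕ) : Set ((Bool ⊕ Fin n) ⊕ Fin k) :=
  {v | (φ.symm v).val < m ∧ accepts gfAlg (gnkGraph n k) φ (φ.symm v) = true}

lemma gfPrev_subset_SSet {m : ℕ} {i : Fin (Fintype.card ((Bool ⊕ Fin n) ⊕ Fin k))}
    (him : m = i.val + 1) {u : (Bool ⊕ Fin n) ⊕ Fin k} (hu : u ∈ gfPrev φ m) :
    u ∈ SSet gfAlg (gnkGraph n k) φ i := by
  obtain ⟨h1, h2⟩ := hu
  subst him
  rcases Nat.lt_succ_iff_lt_or_eq.mp h1 with h | h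
  · exact Or.inr ⟨h, h2⟩
  · exact Or.inl (Fin.ext h)

lemma gf_invariant : ∀ m : ℕ,
    ¬ (pX ∈ gfPrev φ m ∧ pY ∈ gfPrev φ m ∧ ∃ j, pV j ∈ gfPrev φ m) := by
  intro m
  induction m with
  | zero => rintro ⟨⟨h, -⟩, -⟩; omega
  | succ m ih =>
    rintro ⟨hX, hY, j, hV⟩
    have step : ∀ w : (Bool ⊕ Fin n) ⊕ Fin k, w ∈ gfPrev φ (m + 1) →
        (φ.symm w).val = m → False := by
      intro w hw hm
      have hacc : accepts gfAlg (gnkGraph n k) φ (φ.symm w) = true := hw.2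
      have hmem : ∀ u, u ∈ gfPrev φ (m + 1) → u ∈ SSet gfAlg (gnkGraph n k) φ (φ.symm w) := by
        intro u hu
        rcases Nat.lt_succ_iff_lt_or_eq.mp hu.1 with h | h
        · exact Or.inr ⟨by rw [Fin.lt_def]; omega, hu.2⟩
        · exact Or.inl (Fin.ext (by omega))
      exact (accepts_gf_gnk_iff φ (φ.symm w)).mp hacc
        ⟨hmem pX hX, hmem pY hY, j, hmem (pV j) hV⟩
    by_cases h1 : (φ.symm (pX : (Bool ⊕ Fin n) ⊕ Fin k)).val = m
    · exact step pX hX h1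
    by_cases h2 : (φ.symm (pY : (Bool ⊕ Fin n) ⊕ Fin k)).val = m
    · exact step pY hY h2
    by_cases h3 : (φ.symm (pV j : (Bool ⊕ Fin n) ⊕ Fin k)).val = m
    · exact step (pV j) hV h3
    · exact ih ⟨⟨by have := hX.1; omega, hX.2⟩, ⟨by have := hY.1; omega, hY.2⟩, j,
        ⟨by have := hV.1; omega, hV.2⟩⟩

lemma gf_isolated_accepted (i : Fin (Fintype.card ((Bool ⊕ Fin n) ⊕ Fin k))) (j : Fin k)
    (h : φ i = Sum.inr j) : accepts gfAlg (gnkGraph n k) φ i = true := by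
  rw [accepts_gf_gnk_iff]
  rintro ⟨hX, hY, jv, hV⟩
  have hX' : pX ∈ gfPrev φ i.val := by
    rcases of_mem_SSet hX with he | ⟨hlt, hacc⟩
    · rw [h] at he; exact absurd he (by simp)
    · exact ⟨hlt, hacc⟩
  have hY' : pY ∈ gfPrev φ i.val := by
    rcases of_mem_SSet hY with he | ⟨hlt, hacc⟩
    · rw [h] at he; exact absurd he (by simp)
    · exact ⟨hlt, hacc⟩
  have hV' : pV jv ∈ gfPrev φ i.val := by
    rcases of_mem_SSet hV with he | ⟨hlt, hacc⟩
    · rw [h] at he; exact absurd he (by simp)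
    · exact ⟨hlt, hacc⟩
  exact gf_invariant φ i.val ⟨hX', hY', jv, hV'⟩

end GfGnk

section GfGnk2

variable {n k : ℕ}
  (φ : Fin (Fintype.card ((Bool ⊕ Fin n) ⊕ Fin k)) ≃ ((Bool ⊕ Fin n) ⊕ Fin k))

lemma mem_acceptedSet_iff {V : Type} [Fintype V] {A : OnlineAlg} {G : SimpleGraph V}
    {ψ : Fin (Fintype.card V) ≃ V} {v : V} :
    v ∈ acceptedSet A G ψ ↔ accepts A G ψ (ψ.symm v) = true := by
  simp [acceptedSet]

lemma gf_gnk_forest : IsForestSet (gnkGraph n k) (acceptedSet gfAlg (gnkGraph n k) φ) := by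
  rw [IsForestSet, gnk_isAcyclic_iff]
  rintro ⟨hX, hY, j, hV⟩
  rw [Finset.mem_coe, mem_acceptedSet_iff] at hX hY hV
  exact gf_invariant φ (Fintype.card ((Bool ⊕ Fin n) ⊕ Fin k))
    ⟨⟨(φ.symm pX).isLt, hX⟩, ⟨(φ.symm pY).isLt, hY⟩, j, ⟨(φ.symm (pV j)).isLt, hV⟩⟩

lemma gf_gnk_card_ge : k + 2 ≤ (acceptedSet gfAlg (gnkGraph n k) φ).card := by
  classical
  set V' := (Bool ⊕ Fin n) ⊕ Fin k
  set G := gnkGraph n k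
  set C : Finset (Fin (Fintype.card V')) :=
    Finset.univ.filter (fun i => ∃ c, φ i = Sum.inl c) with hC
  have hmemC : ∀ i, i ∈ C ↔ ∃ c, φ i = Sum.inl c := by
    intro i; simp [hC]
  have hXC : φ.symm (pX : V') ∈ C := by
    rw [hmemC]
    exact ⟨Sum.inl true, φ.apply_symm_apply _⟩
  have hYC : φ.symm (pY : V') ∈ C := by
    rw [hmemC]
    exact ⟨Sum.inl false, φ.apply_symm_apply _⟩
  have hXYne : φ.symm (pX : V') ≠ φ.symm (pY : V') := by
    intro h
    exact pX_ne_pY (φ.symm.injective h)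
  set i1 := C.min' ⟨_, hXC⟩ with hi1
  have hi1C : i1 ∈ C := C.min'_mem _
  have hCerase : (C.erase i1).Nonempty := by
    rcases eq_or_ne (φ.symm (pX : V')) i1 with h | h
    · exact ⟨φ.symm pY, Finset.mem_erase.mpr ⟨by rw [← h]; exact hXYne.symm, hYC⟩⟩
    · exact ⟨φ.symm pX, Finset.mem_erase.mpr ⟨h, hXC⟩⟩
  set i2 := (C.erase i1).min' hCerase with hi2
  have hi2e : i2 ∈ C.erase i1 := (C.erase i1).min'_mem _
  have hi2C : i2 ∈ C := Finset.mem_of_mem_erase hi2e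
  have hne12 : i2 ≠ i1 := (Finset.mem_erase.mp hi2e).1
  have hmin1 : ∀ j ∈ C, i1 ≤ j := fun j hj => C.min'_le j hj
  have hbelow : ∀ j ∈ C, j ≠ i1 → i2 ≤ j := fun j hj hne =>
    (C.erase i1).min'_le j (Finset.mem_erase.mpr ⟨hne, hj⟩)
  -- any core vertex in `SSet _ _ _ i1` is `φ i1`
  have hcore1 : ∀ w : V', (∃ c, w = Sum.inl c) → w ∈ SSet gfAlg G φ i1 → w = φ i1 := by
    rintro w ⟨c, rfl⟩ hw
    rcases of_mem_SSet hw with h | ⟨hlt, -⟩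
    · exact h
    · exfalso
      have : φ.symm (Sum.inl c) ∈ C := by
        rw [hmemC]; exact ⟨c, φ.apply_symm_apply _⟩
      exact absurd (hmin1 _ this) (not_le.mpr hlt)
  have hcore2 : ∀ w : V', (∃ c, w = Sum.inl c) → w ∈ SSet gfAlg G φ i2 →
      w = φ i1 ∨ w = φ i2 := by
    rintro w ⟨c, rfl⟩ hw
    rcases of_mem_SSet hw with h | ⟨hlt, -⟩
    · exact Or.inr h
    · left
      have hmem : φ.symm (Sum.inl c) ∈ C := by
        rw [hmemC]; exact ⟨c, φ.apply_symm_apply _⟩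
      have : φ.symm (Sum.inl c) = i1 := by
        by_contra hne
        exact absurd (hbelow _ hmem hne) (not_le.mpr hlt)
      rw [← this, φ.apply_symm_apply]
  have acc1 : accepts gfAlg G φ i1 = true := by
    rw [accepts_gf_gnk_iff]
    rintro ⟨hX, hY, -⟩
    have h1 := hcore1 pX ⟨Sum.inl true, rfl⟩ hX
    have h2 := hcore1 pY ⟨Sum.inl false, rfl⟩ hY
    exact pX_ne_pY (h1.trans h2.symm)
  have acc2 : accepts gfAlg G φ i2 = true := by
    rw [accepts_gf_gnk_iff]
    rintro ⟨hX, hY, j, hV⟩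
    have h1 := hcore2 pX ⟨Sum.inl true, rfl⟩ hX
    have h2 := hcore2 pY ⟨Sum.inl false, rfl⟩ hY
    have h3 := hcore2 (pV j) ⟨Sum.inr j, rfl⟩ hV
    rcases h1 with h1 | h1 <;> rcases h2 with h2 | h2 <;> rcases h3 with h3 | h3
    · exact pX_ne_pY (h1.trans h2.symm)
    · exact pX_ne_pY (h1.trans h2.symm)
    · exact pX_ne_pV j (h1.trans h3.symm)
    · exact pY_ne_pV j (h2.trans h3.symm)
    · exact pY_ne_pV j (h2.trans h3.symm)
    · exact pX_ne_pV j (h1.trans h3.symm)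
    · exact pX_ne_pY (h1.trans h2.symm)
    · exact pX_ne_pY (h1.trans h2.symm)
  -- the explicit subset of accepted vertices
  set T : Finset V' :=
    insert (φ i1) (insert (φ i2) (Finset.univ.image (fun j : Fin k => (Sum.inr j : V')))) with hT
  have hsub : T ⊆ acceptedSet gfAlg G φ := by
    intro v hv
    rw [mem_acceptedSet_iff]
    rw [hT, Finset.mem_insert, Finset.mem_insert] at hv
    rcases hv with rfl | rfl | hv
    · rw [φ.symm_apply_apply]; exact acc1
    · rw [φ.symm_apply_apply]; exact acc2
    · obtain ⟨j, -, rfl⟩ := Finset.mem_image.mp hv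
      exact gf_isolated_accepted φ (φ.symm (Sum.inr j)) j (φ.apply_symm_apply _)
  have hcard : T.card = k + 2 := by
    have him : (Finset.univ.image (fun j : Fin k => (Sum.inr j : V'))).card = k := by
      rw [Finset.card_image_of_injective _ (fun a b h => by simpa using h)]
      simp
    obtain ⟨c1, hc1⟩ := (hmemC i1).mp hi1C
    obtain ⟨c2, hc2⟩ := (hmemC i2).mp hi2C
    have h2ni : φ i2 ∉ Finset.univ.image (fun j : Fin k => (Sum.inr j : V')) := by
      simp only [Finset.mem_image]
      rintro ⟨j, -, hj⟩
      rw [hc2] at hj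
      exact absurd hj (by simp)
    have h1ni : φ i1 ∉ insert (φ i2) (Finset.univ.image (fun j : Fin k => (Sum.inr j : V'))) := by
      rw [Finset.mem_insert]
      rintro (he | hv)
      · exact hne12 (φ.injective he.symm)
      · obtain ⟨j, -, hj⟩ := Finset.mem_image.mp hv
        rw [hc1] at hj
        exact absurd hj (by simp)
    rw [hT, Finset.card_insert_of_notMem h1ni, Finset.card_insert_of_notMem h2ni, him]
  calc k + 2 = T.card := hcard.symm
    _ ≤ _ := Finset.card_le_card hsub

end GfGnk2

section GfGnk3

variable (n k : ℕ)

lemma gnk_card : Fintype.card ((Bool ⊕ Fin n) ⊕ Fin k) = 2 + n + k := by simp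

/-- The adversarial order: `y`, `x`, then `v_1, …, v_n`, then the isolated vertices. -/
def gfOrder : Fin (Fintype.card ((Bool ⊕ Fin n) ⊕ Fin k)) ≃ ((Bool ⊕ Fin n) ⊕ Fin k) :=
  (finCongr (gnk_card n k)).trans
    ((finSumFinEquiv.symm).trans
      (Equiv.sumCongr
        ((finSumFinEquiv.symm).trans (Equiv.sumCongr finTwoEquiv (Equiv.refl (Fin n))))
        (Equiv.refl (Fin k))))

lemma gfOrder_symm_pY :
    (gfOrder n k).symm pY =
      (finCongr (gnk_card n k).symm) (Fin.castAdd k (Fin.castAdd n (0 : Fin 2))) := by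
  rw [Equiv.symm_apply_eq]
  simp [gfOrder, finTwoEquiv]

lemma gfOrder_symm_pX :
    (gfOrder n k).symm pX =
      (finCongr (gnk_card n k).symm) (Fin.castAdd k (Fin.castAdd n (1 : Fin 2))) := by
  rw [Equiv.symm_apply_eq]
  simp [gfOrder, finTwoEquiv]

lemma gfOrder_symm_pV (j : Fin n) :
    (gfOrder n k).symm (pV j) =
      (finCongr (gnk_card n k).symm) (Fin.castAdd k (Fin.natAdd 2 j)) := by
  rw [Equiv.symm_apply_eq]
  simp [gfOrder]

lemma gfOrder_symm_pY_val : ((gfOrder n k).symm (pY : (Bool ⊕ Fin n) ⊕ Fin k)).val = 0 := by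
  rw [gfOrder_symm_pY]
  simp

lemma gfOrder_symm_pX_val : ((gfOrder n k).symm (pX : (Bool ⊕ Fin n) ⊕ Fin k)).val = 1 := by
  rw [gfOrder_symm_pX]
  simp [Fin.val_one]

lemma gfOrder_symm_pV_val (j : Fin n) :
    ((gfOrder n k).symm (pV j : (Bool ⊕ Fin n) ⊕ Fin k)).val = 2 + j.val := by
  rw [gfOrder_symm_pV]
  simp

lemma gfOrder_acc_pY :
    accepts gfAlg (gnkGraph n k) (gfOrder n k) ((gfOrder n k).symm pY) = true := by
  rw [accepts_gf_gnk_iff]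
  rintro ⟨hX, -, -⟩
  rcases of_mem_SSet hX with h | ⟨hlt, -⟩
  · rw [Equiv.apply_symm_apply] at h
    exact pX_ne_pY h
  · rw [Fin.lt_def, gfOrder_symm_pY_val] at hlt
    omega

lemma gfOrder_acc_pX :
    accepts gfAlg (gnkGraph n k) (gfOrder n k) ((gfOrder n k).symm pX) = true := by
  rw [accepts_gf_gnk_iff]
  rintro ⟨-, -, j, hV⟩
  rcases of_mem_SSet hV with h | ⟨hlt, -⟩
  · rw [Equiv.apply_symm_apply] at h
    exact pX_ne_pV j h.symm
  · rw [Fin.lt_def, gfOrder_symm_pV_val, gfOrder_symm_pX_val] at hlt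
    omega

lemma gfOrder_rej_pV (j : Fin n) :
    ¬ accepts gfAlg (gnkGraph n k) (gfOrder n k) ((gfOrder n k).symm (pV j)) = true := by
  intro hacc
  refine (accepts_gf_gnk_iff (gfOrder n k) ((gfOrder n k).symm (pV j))).mp hacc ⟨?_, ?_, j, ?_⟩
  · refine mem_SSet_of_acc ?_ (gfOrder_acc_pX n k)
    rw [Fin.lt_def, gfOrder_symm_pV_val, gfOrder_symm_pX_val]
    omega
  · refine mem_SSet_of_acc ?_ (gfOrder_acc_pY n k)
    rw [Fin.lt_def, gfOrder_symm_pV_val, gfOrder_symm_pY_val]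
    omega
  · exact Or.inl rfl

lemma gfOrder_card_le :
    (acceptedSet gfAlg (gnkGraph n k) (gfOrder n k)).card ≤ k + 2 := by
  classical
  set B : Finset ((Bool ⊕ Fin n) ⊕ Fin k) :=
    Finset.univ.image (fun j : Fin n => (pV j : (Bool ⊕ Fin n) ⊕ Fin k)) with hB
  have hcardB : B.card = n := by
    rw [hB, Finset.card_image_of_injective _ (fun a b h => by simpa using h)]
    simp
  have hsub : acceptedSet gfAlg (gnkGraph n k) (gfOrder n k) ⊆ Finset.univ \ B := by
    intro v hv
    rw [Finset.mem_sdiff]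
    refine ⟨Finset.mem_univ v, fun hvB => ?_⟩
    obtain ⟨j, -, rfl⟩ := Finset.mem_image.mp hvB
    exact gfOrder_rej_pV n k j (mem_acceptedSet_iff.mp hv)
  calc (acceptedSet gfAlg (gnkGraph n k) (gfOrder n k)).card
      ≤ (Finset.univ \ B).card := Finset.card_le_card hsub
    _ = Fintype.card ((Bool ⊕ Fin n) ⊕ Fin k) - n := by
        rw [Finset.card_sdiff_of_subset (Finset.subset_univ B), hcardB, Finset.card_univ]
    _ ≤ k + 2 := by rw [gnk_card]; omega

lemma gf_minScore : minScore gfAlg (gnkGraph n k) = k + 2 := by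
  have hub : (acceptedSet gfAlg (gnkGraph n k) (gfOrder n k)).card = k + 2 :=
    le_antisymm (gfOrder_card_le n k) (gf_gnk_card_ge (gfOrder n k))
  apply le_antisymm
  · exact Nat.sInf_le ⟨gfOrder n k, hub⟩
  · refine le_csInf ⟨k + 2, gfOrder n k, hub⟩ ?_
    rintro m ⟨φ, rfl⟩
    exact gf_gnk_card_ge φ

end GfGnk3

/-! ### Uniqueness of rule firings -/

section RuleUnique

lemma three_in_two {α : Type} {x y z a b : α} (hxy : x ≠ y) (hxz : x ≠ z) (hyz : y ≠ z)
    (hx : x = a ∨ x = b) (hy : y = a ∨ y = b) (hz : z = a ∨ z = b) : False := by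
  rcases hx with rfl | rfl <;> rcases hy with h | h <;> rcases hz with h' | h' <;>
    first
      | exact hxy h.symm
      | exact hxz h'.symm
      | exact hyz (h.trans h'.symm)

variable {V : Type} [Fintype V] (G : SimpleGraph V) (φ : Fin (Fintype.card V) ≃ V)

lemma self_mem_RSet {i : Fin (Fintype.card V)} : φ i ∈ RSet φ i :=
  le_of_eq (φ.symm_apply_apply i)

lemma RSet_mono {i i' : Fin (Fintype.card V)} (h : i ≤ i') : RSet φ i ⊆ RSet φ i' :=
  fun _ hv => le_trans hv h

lemma not_mem_RSet_of_gt {i i' : Fin (Fintype.card V)} (h : i < i') : φ i' ∉ RSet φ i := by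
  intro hmem
  have : φ.symm (φ i') ≤ i := hmem
  rw [φ.symm_apply_apply] at this
  exact absurd h (not_lt.mpr this)

lemma Rule1G_unique_lt {i i' : Fin (Fintype.card V)} (hlt : i < i')
    (h : Rule1G G φ i) (h' : Rule1G G φ i') : False := by
  obtain ⟨⟨u, huR, huAdj⟩, -⟩ := h
  obtain ⟨⟨u', hu'R, hu'Adj⟩, a, b, -, -, -, huniq⟩ := h'
  have hmono := RSet_mono φ (le_of_lt hlt)
  have hp1 : PosG G φ i' (φ i) := ⟨hmono (self_mem_RSet φ), u, hmono huR, huAdj⟩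
  have hp2 : PosG G φ i' u := ⟨hmono huR, φ i, hmono (self_mem_RSet φ), huAdj.symm⟩
  have hp3 : PosG G φ i' (φ i') := ⟨self_mem_RSet φ, u', hu'R, hu'Adj⟩
  have hne1 : φ i ≠ u := huAdj.ne
  have hne2 : φ i ≠ φ i' := fun he => absurd (he ▸ self_mem_RSet φ (i := i))
    (not_mem_RSet_of_gt φ hlt)
  have hne3 : u ≠ φ i' := fun he => absurd (he ▸ huR) (not_mem_RSet_of_gt φ hlt)
  exact three_in_two hne1 hne2 hne3 (huniq _ hp1) (huniq _ hp2) (huniq _ hp3)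

lemma Rule1G_unique {i i' : Fin (Fintype.card V)}
    (h : Rule1G G φ i) (h' : Rule1G G φ i') : i = i' := by
  rcases lt_trichotomy i i' with hlt | he | hlt
  · exact absurd (Rule1G_unique_lt G φ hlt h h') (fun f => f)
  · exact he
  · exact absurd (Rule1G_unique_lt G φ hlt h' h) (fun f => f)

lemma Rule2G_unique_lt {i i' : Fin (Fintype.card V)} (hlt : i < i')
    (h : Rule2G G φ i) (h' : Rule2G G φ i') : False := by
  obtain ⟨a, b, hab, ⟨haR, haw⟩, ⟨hbR, hbw⟩, hadj, -, -⟩ := h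
  obtain ⟨a', b', -, -, -, -, -, huniq2⟩ := h'
  have hmono := RSet_mono φ (le_of_lt hlt)
  have hp1 : PosG G φ i' a := ⟨hmono haR, b, hmono hbR, hadj⟩
  have hp2 : PosG G φ i' b := ⟨hmono hbR, a, hmono haR, hadj.symm⟩
  have hp3 : PosG G φ i' (φ i) := ⟨hmono (self_mem_RSet φ), a, hmono haR, haw.symm⟩
  have hred : ∀ c, c ∈ RSet φ i → (c = a' ∨ c = b' ∨ c = φ i') → c = a' ∨ c = b' := by
    rintro c hc (hc' | hc' | rfl)
    · exact Or.inl hc'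
    · exact Or.inr hc'
    · exact absurd hc (not_mem_RSet_of_gt φ hlt)
  have hx := hred a haR (huniq2 a hp1)
  have hy := hred b hbR (huniq2 b hp2)
  have hz := hred (φ i) (self_mem_RSet φ) (huniq2 (φ i) hp3)
  exact three_in_two hab haw.ne hbw.ne hx hy hz
  -- note: `a ≠ φ i` from `haw : G.Adj a (φ i)` and `b ≠ φ i` likewise
lemma Rule2G_unique {i i' : Fin (Fintype.card V)}
    (h : Rule2G G φ i) (h' : Rule2G G φ i') : i = i' := by
  rcases lt_trichotomy i i' with hlt | he | hlt
  · exact absurd (Rule2G_unique_lt G φ hlt h h') (fun f => f)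
  · exact he
  · exact absurd (Rule2G_unique_lt G φ hlt h' h) (fun f => f)

end RuleUnique

/-! ### The improved algorithm on `G_{n,k}` -/

section MyGnk

variable {n k : ℕ}

lemma gnk_adj_to_v {c : (Bool ⊕ Fin n) ⊕ Fin k} (j : Fin n)
    (h : (gnkGraph n k).Adj c (pV j)) : c = pX ∨ c = pY := by
  rcases gnk_adj_iff.mp h with ⟨rfl, he⟩ | ⟨rfl, he⟩ | ⟨j', hc, he⟩ | ⟨j', rfl, he⟩
  · exact absurd he.symm (pY_ne_pV j)
  · exact absurd he.symm (pX_ne_pV j)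
  · exact hc
  · rcases he with he | he
    · exact absurd he.symm (pX_ne_pV j)
    · exact absurd he.symm (pY_ne_pV j)

lemma gnk_adj_to_bool {c : (Bool ⊕ Fin n) ⊕ Fin k} {v : Bool}
    (h : (gnkGraph n k).Adj c (Sum.inl (Sum.inl v))) :
    c = Sum.inl (Sum.inl (!v)) ∨ ∃ j, c = pV j := by
  rcases gnk_adj_iff.mp h with ⟨rfl, he⟩ | ⟨rfl, he⟩ | ⟨j', hc, he⟩ | ⟨j', rfl, he⟩
  · have hv : v = false := by simpa using he.symm
    subst hv
    exact Or.inl rfl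
  · have hv : v = true := by simpa using he.symm
    subst hv
    exact Or.inl rfl
  · exact absurd he (by simp)
  · exact Or.inr ⟨j', rfl⟩

lemma my_rejected_cases (φ : Fin (Fintype.card ((Bool ⊕ Fin n) ⊕ Fin k)) ≃ ((Bool ⊕ Fin n) ⊕ Fin k))
    (i : Fin (Fintype.card ((Bool ⊕ Fin n) ⊕ Fin k)))
    (h : ¬ accepts myAlg (gnkGraph n k) φ i = true) :
    Rule1G (gnkGraph n k) φ i ∨ Rule2G (gnkGraph n k) φ i ∨
      ¬ SafetyG myAlg (gnkGraph n k) φ i := by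
  by_contra hno
  push_neg at hno
  exact h ((accepts_my_iff (gnkGraph n k) φ i).mpr ⟨hno.1, hno.2.1, hno.2.2⟩)

variable (φ : Fin (Fintype.card ((Bool ⊕ Fin n) ⊕ Fin k)) ≃ ((Bool ⊕ Fin n) ⊕ Fin k))

lemma my_notboth_aux (A B : (Bool ⊕ Fin n) ⊕ Fin k) (u : Bool)
    (hA : A = Sum.inl (Sum.inl u)) (hB : B = Sum.inl (Sum.inl (!u)))
    (hlt : φ.symm A < φ.symm B)
    (haccA : accepts myAlg (gnkGraph n k) φ (φ.symm A) = true)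
    (haccB : accepts myAlg (gnkGraph n k) φ (φ.symm B) = true) : False := by
  have hadjAB : (gnkGraph n k).Adj A B := by
    subst hA; subst hB
    cases u
    · exact gnk_adj_XY.symm
    · exact gnk_adj_XY
  have hadjAV : ∀ j, (gnkGraph n k).Adj A (pV j) := by
    intro j; subst hA; cases u
    · exact gnk_adj_YV j
    · exact gnk_adj_XV j
  have hadjBV : ∀ j, (gnkGraph n k).Adj B (pV j) := by
    intro j; subst hB; cases u
    · exact gnk_adj_XV j
    · exact gnk_adj_YV j
  have hxy_cases : ∀ c : (Bool ⊕ Fin n) ⊕ Fin k, (c = pX ∨ c = pY) → c = A ∨ c = B := by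
    intro c hc
    subst hA; subst hB
    cases u
    · rcases hc with rfl | rfl
      · exact Or.inr rfl
      · exact Or.inl rfl
    · rcases hc with rfl | rfl
      · exact Or.inl rfl
      · exact Or.inr rfl
  have hBxy : B = pX ∨ B = pY := by
    subst hB; cases u
    · exact Or.inl rfl
    · exact Or.inr rfl
  have hABne : A ≠ B := hadjAB.ne
  have hAneV : ∀ j, A ≠ pV j := by
    intro j; subst hA; simp
  have hBneV : ∀ j, B ≠ pV j := by
    intro j; subst hB; simp
  have hBtoA : ∀ c, (gnkGraph n k).Adj c B → c = A ∨ ∃ j, c = pV j := by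
    intro c h
    subst hB
    rcases gnk_adj_to_bool h with h | h
    · rw [Bool.not_not] at h
      rw [hA]
      exact Or.inl h
    · exact Or.inr h
  set iB := φ.symm B with hiB
  have hφiB : φ iB = B := φ.apply_symm_apply B
  have hBSS : B ∈ SSet myAlg (gnkGraph n k) φ iB := Or.inl rfl
  have hASS : A ∈ SSet myAlg (gnkGraph n k) φ iB := Or.inr ⟨hlt, haccA⟩
  have hAR : A ∈ RSet φ iB := le_of_lt hlt
  have hBR : B ∈ RSet φ iB := le_of_eq hiB.symm
  obtain ⟨hnr1, hnr2, hsafe⟩ := (accepts_my_iff (gnkGraph n k) φ iB).mp haccB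
  have hjlt : ∀ j, pV j ∈ RSet φ iB → φ.symm (pV j) < iB := by
    intro j hjR
    refine lt_of_le_of_ne hjR (fun he => hBneV j ?_)
    have hpv : (pV j : (Bool ⊕ Fin n) ⊕ Fin k) = B := by
      rw [← hφiB, ← he, Equiv.apply_symm_apply]
    exact hpv.symm
  by_cases hv : ∃ j, pV j ∈ RSet φ iB ∧ accepts myAlg (gnkGraph n k) φ (φ.symm (pV j)) = true
  · obtain ⟨j, hjR, hjacc⟩ := hv
    exact hsafe ⟨A, B, pV j, hASS, hBSS, Or.inr ⟨hjlt j hjR, hjacc⟩,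
      hadjAB, hadjAV j, hadjBV j⟩
  · push_neg at hv
    by_cases hv1 : ∃ j, pV j ∈ RSet φ iB
    · obtain ⟨j1, hj1⟩ := hv1
      by_cases hv2 : ∃ j', pV j' ∈ RSet φ iB ∧ (pV j' : (Bool ⊕ Fin n) ⊕ Fin k) ≠ pV j1
      · obtain ⟨j2, hj2R, hj2ne⟩ := hv2
        have hkey : ∀ j, pV j ∈ RSet φ iB → Rule1G (gnkGraph n k) φ (φ.symm (pV j)) := by
          intro j hjR
          have hjlt' := hjlt j hjR
          rcases my_rejected_cases φ _ (hv j hjR) with h1 | h2 | h3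
          · exact h1
          · exfalso
            obtain ⟨a, b, hab, ⟨haR, haw⟩, ⟨hbR, hbw⟩, -, -, -⟩ := h2
            rw [Equiv.apply_symm_apply] at haw hbw
            have ha' := gnk_adj_to_v j haw
            have hb' := gnk_adj_to_v j hbw
            have hBmem : B ∈ RSet φ (φ.symm (pV j)) := by
              rcases hxy_cases a ha' with rfl | rfl <;> rcases hxy_cases b hb' with rfl | rfl
              · exact absurd rfl hab
              · exact hbR
              · exact haR
              · exact absurd rfl hab
            exact absurd (lt_of_le_of_lt hBmem hjlt') (lt_irrefl iB)
          · exfalso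
            rw [SafetyG, not_not] at h3
            obtain ⟨x, y, z, hx, hy, hz, e1, e2, e3⟩ := h3
            obtain ⟨hXm, hYm, -⟩ := gnk_triangle hx hy hz e1 e2 e3
            have hBSS' : B ∈ SSet myAlg (gnkGraph n k) φ (φ.symm (pV j)) := by
              rcases hBxy with he | he
              · rw [he]; exact hXm
              · rw [he]; exact hYm
            rcases of_mem_SSet hBSS' with he | ⟨hlt', -⟩
            · rw [Equiv.apply_symm_apply] at he
              exact hBneV j he
            · exact absurd (lt_trans hlt' hjlt') (lt_irrefl iB)
        have := Rule1G_unique (gnkGraph n k) φ (hkey j1 hj1) (hkey j2 hj2R)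
        exact hj2ne (φ.symm.injective this.symm)
      · push_neg at hv2
        apply hnr2
        refine ⟨A, pV j1, hAneV j1, ⟨hAR, by rw [hφiB]; exact hadjAB⟩,
          ⟨hj1, by rw [hφiB]; exact (hadjBV j1).symm⟩, hadjAV j1, ?_, ?_⟩
        · intro c hcR hcadj
          rw [hφiB] at hcadj
          rcases hBtoA c hcadj with rfl | ⟨j', rfl⟩
          · exact Or.inl rfl
          · exact Or.inr (hv2 j' hcR)
        · rintro c ⟨hcR, u', hu'R, hcadj⟩
          rcases gnk_adj_form hcadj with hform | ⟨j', rfl⟩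
          · rcases hxy_cases c hform with rfl | rfl
            · exact Or.inl rfl
            · exact Or.inr (Or.inr hφiB.symm)
          · exact Or.inr (Or.inl (hv2 j' hcR))
    · push_neg at hv1
      apply hnr1
      refine ⟨⟨A, hAR, by rw [hφiB]; exact hadjAB.symm⟩, A, B, hABne,
        ⟨hAR, B, hBR, hadjAB⟩, ⟨hBR, A, hAR, hadjAB.symm⟩, ?_⟩
      rintro c ⟨hcR, u', hu'R, hcadj⟩
      rcases gnk_adj_form hcadj with hform | ⟨j', rfl⟩
      · exact hxy_cases c hform
      · exact absurd hcR (hv1 j')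

lemma my_notboth :
    ¬ (accepts myAlg (gnkGraph n k) φ (φ.symm pX) = true ∧
        accepts myAlg (gnkGraph n k) φ (φ.symm pY) = true) := by
  rintro ⟨hX, hY⟩
  have hne : φ.symm (pX : (Bool ⊕ Fin n) ⊕ Fin k) ≠ φ.symm pY :=
    fun h => pX_ne_pY (φ.symm.injective h)
  rcases lt_or_gt_of_ne hne with h | h
  · exact my_notboth_aux φ pX pY true rfl rfl h hX hY
  · exact my_notboth_aux φ pY pX false rfl rfl h hY hX

lemma my_safety_unique {i i' : Fin (Fintype.card ((Bool ⊕ Fin n) ⊕ Fin k))}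
    (h : ¬ SafetyG myAlg (gnkGraph n k) φ i) (h' : ¬ SafetyG myAlg (gnkGraph n k) φ i') :
    i = i' := by
  have key : ∀ {j : Fin (Fintype.card ((Bool ⊕ Fin n) ⊕ Fin k))},
      ¬ SafetyG myAlg (gnkGraph n k) φ j →
      pX ∈ SSet myAlg (gnkGraph n k) φ j ∧ pY ∈ SSet myAlg (gnkGraph n k) φ j := by
    intro j hj
    rw [SafetyG, not_not] at hj
    obtain ⟨x, y, z, hx, hy, hz, e1, e2, e3⟩ := hj
    obtain ⟨h1, h2, -⟩ := gnk_triangle hx hy hz e1 e2 e3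
    exact ⟨h1, h2⟩
  obtain ⟨hXi, hYi⟩ := key h
  obtain ⟨hXi', hYi'⟩ := key h'
  have hnb := my_notboth φ
  rcases of_mem_SSet hXi with hx | ⟨-, ax⟩
  · rcases of_mem_SSet hXi' with hx' | ⟨-, ax'⟩
    · exact φ.injective (hx.symm.trans hx')
    · rcases of_mem_SSet hYi with hy | ⟨-, ay⟩
      · exfalso; exact pX_ne_pY (hx.trans hy.symm)
      · exact absurd ⟨ax', ay⟩ hnb
  · rcases of_mem_SSet hYi with hy | ⟨-, ay⟩
    · rcases of_mem_SSet hYi' with hy' | ⟨-, ay'⟩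
      · exact φ.injective (hy.symm.trans hy')
      · exact absurd ⟨ax, ay'⟩ hnb
    · exact absurd ⟨ax, ay⟩ hnb

end MyGnk

section MyGnk2

variable {n k : ℕ}
  (φ : Fin (Fintype.card ((Bool ⊕ Fin n) ⊕ Fin k)) ≃ ((Bool ⊕ Fin n) ⊕ Fin k))

lemma my_forest : IsForestSet (gnkGraph n k) (acceptedSet myAlg (gnkGraph n k) φ) := by
  rw [IsForestSet, gnk_isAcyclic_iff]
  rintro ⟨hX, hY, -⟩
  rw [Finset.mem_coe, mem_acceptedSet_iff] at hX hY
  exact my_notboth φ ⟨hX, hY⟩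

lemma my_card_ge : k + n - 1 ≤ (acceptedSet myAlg (gnkGraph n k) φ).card := by
  classical
  set G := gnkGraph n k
  set p : Fin (Fintype.card ((Bool ⊕ Fin n) ⊕ Fin k)) → Prop :=
    fun i => accepts myAlg G φ i = true with hp
  have hacc : (acceptedSet myAlg G φ).card = (Finset.univ.filter p).card := by
    refine Finset.card_equiv φ.symm (fun v => ?_)
    simp [mem_acceptedSet_iff, hp]
  have hsplit : (Finset.univ.filter p).card + (Finset.univ.filter (fun i => ¬ p i)).card
      = 2 + n + k := by
    rw [Finset.card_filter_add_card_filter_not]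
    simp [gnk_card]
  set F1 := Finset.univ.filter (fun i => Rule1G G φ i) with hF1
  set F2 := Finset.univ.filter (fun i => Rule2G G φ i) with hF2
  set F3 := Finset.univ.filter (fun i => ¬ SafetyG myAlg G φ i) with hF3
  have hsub : Finset.univ.filter (fun i => ¬ p i) ⊆ F1 ∪ (F2 ∪ F3) := by
    intro i hi
    rw [Finset.mem_filter] at hi
    rcases my_rejected_cases φ i hi.2 with h | h | h
    · exact Finset.mem_union_left _ (Finset.mem_filter.mpr ⟨Finset.mem_univ i, h⟩)
    · exact Finset.mem_union_right _
        (Finset.mem_union_left _ (Finset.mem_filter.mpr ⟨Finset.mem_univ i, h⟩))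
    · exact Finset.mem_union_right _
        (Finset.mem_union_right _ (Finset.mem_filter.mpr ⟨Finset.mem_univ i, h⟩))
  have hc1 : F1.card ≤ 1 := Finset.card_le_one.mpr (fun a ha b hb =>
    Rule1G_unique G φ (Finset.mem_filter.mp ha).2 (Finset.mem_filter.mp hb).2)
  have hc2 : F2.card ≤ 1 := Finset.card_le_one.mpr (fun a ha b hb =>
    Rule2G_unique G φ (Finset.mem_filter.mp ha).2 (Finset.mem_filter.mp hb).2)
  have hc3 : F3.card ≤ 1 := Finset.card_le_one.mpr (fun a ha b hb =>
    my_safety_unique φ (Finset.mem_filter.mp ha).2 (Finset.mem_filter.mp hb).2)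
  have hrej : (Finset.univ.filter (fun i => ¬ p i)).card ≤ 3 := by
    calc (Finset.univ.filter (fun i => ¬ p i)).card
        ≤ (F1 ∪ (F2 ∪ F3)).card := Finset.card_le_card hsub
      _ ≤ F1.card + (F2 ∪ F3).card := Finset.card_union_le _ _
      _ ≤ F1.card + (F2.card + F3.card) := by
          exact Nat.add_le_add_left (Finset.card_union_le _ _) _
      _ ≤ 3 := by omega
  omega

end MyGnk2
/-- for `n ≥ 4` and any `k ≥ 0`, on the graph `G_{n,k}` the greedy algorithm
for Online Maximal Forest always produces a forest and satisfies `GF(G_{n,k}) = k + 2`,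
while some online algorithm always produces a forest of size at least `k + n - 1`;
in particular the greedy algorithm is not online optimal on `G_{n,k}`. -/
theorem statement16 (n k : ℕ) (hn : 4 ≤ n) :
    (∀ φ : Fin (Fintype.card ((Bool ⊕ Fin n) ⊕ Fin k)) ≃ ((Bool ⊕ Fin n) ⊕ Fin k),
        IsForestSet (gnkGraph n k) (acceptedSet gfAlg (gnkGraph n k) φ)) ∧
      minScore gfAlg (gnkGraph n k) = k + 2 ∧
      (∃ A : OnlineAlg,
        ∀ φ : Fin (Fintype.card ((Bool ⊕ Fin n) ⊕ Fin k)) ≃ ((Bool ⊕ Fin n) ⊕ Fin k),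
          IsForestSet (gnkGraph n k) (acceptedSet A (gnkGraph n k) φ) ∧
            k + n - 1 ≤ (acceptedSet A (gnkGraph n k) φ).card) ∧
      minScore gfAlg (gnkGraph n k) < k + n - 1 := by
  refine ⟨fun φ => gf_gnk_forest φ, gf_minScore n k,
    ⟨myAlg, fun φ => ⟨my_forest φ, my_card_ge φ⟩⟩, ?_⟩
  rw [gf_minScore]
  omega

end OnlinePaper
end
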